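/- arXiv:1408.1703 — 3 statements merged into one kernel-verified Lean document; each statement's English description precedes it below -/
import Mathlib

section
/- A signed eulerian graph is flow-admissible (admits a nowhere-zero integer flow) if and only if it is not tightly unbalanced. -/
set_option linter.unusedSectionVars false
set_option maxHeartbeats 1000000


open Finset

/-- A signed multigraph on vertex type `V` with edge type `E`: each edge `e`
consists of two half-edges indexed by `Bool`; `ends e i` is the end-vertex at
which the half-edge `(e, i)` is attached (loops and multiple edges are
allowed), and `sign e ∈ {1, -1}` is the sign of the edge `e`. -/
structure SignedGraph (V E : Type) where
  ends : E → Bool → V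
  sign : E → ℤˣ

namespace SignedGraph

variable {V E : Type} [Fintype V] [Fintype E] [DecidableEq V] [DecidableEq E]

/-- The valency of `v` in the subgraph spanned by the edge set `S`:
the number of half-edges of edges of `S` attached at `v` (a loop at `v`
contributes `2`). -/
def valencyOn (G : SignedGraph V E) (S : Finset E) (v : V) : ℕ :=
  (univ.filter fun p : E × Bool => p.1 ∈ S ∧ G.ends p.1 p.2 = v).card

/-- The valency of a vertex in `G`. -/
def valency (G : SignedGraph V E) (v : V) : ℕ :=
  G.valencyOn univ v

/-- The set of vertices incident with some edge of `S`. -/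
def suppV (G : SignedGraph V E) (S : Finset E) : Finset V :=
  univ.filter fun v => ∃ e ∈ S, ∃ i : Bool, G.ends e i = v

/-- `u` and `v` are joined by an edge of `S`. -/
def AdjOn (G : SignedGraph V E) (S : Finset E) (u v : V) : Prop :=
  ∃ e ∈ S, ∃ i : Bool, G.ends e i = u ∧ G.ends e (!i) = v

/-- The subgraph spanned by the edge set `S` is connected: any two vertices
incident with edges of `S` are joined by a walk using edges of `S`. -/
def ConnOn (G : SignedGraph V E) (S : Finset E) : Prop :=
  ∀ u ∈ G.suppV S, ∀ v ∈ G.suppV S, Relation.ReflTransGen (G.AdjOn S) u v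

/-- `G` is connected (as a graph on the whole vertex set `V`). -/
def Connected (G : SignedGraph V E) : Prop :=
  Nonempty V ∧ ∀ u v : V, Relation.ReflTransGen (G.AdjOn univ) u v

/-- The edge set `S` spans a circuit: a nonempty connected `2`-regular
subgraph. -/
def IsCircuit (G : SignedGraph V E) (S : Finset E) : Prop :=
  S.Nonempty ∧ G.ConnOn S ∧ ∀ v ∈ G.suppV S, G.valencyOn S v = 2

/-- The sign of a set of edges: the product of the signs of its edges. -/
def signOf (G : SignedGraph V E) (S : Finset E) : ℤˣ :=
  ∏ e ∈ S, G.sign e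

/-- The negative edges among `S`. -/
def negEdges (G : SignedGraph V E) (S : Finset E) : Finset E :=
  S.filter fun e => G.sign e = -1

/-- A balanced circuit: a circuit of sign `+1`. -/
def IsBalancedCircuit (G : SignedGraph V E) (S : Finset E) : Prop :=
  G.IsCircuit S ∧ G.signOf S = 1

/-- An unbalanced circuit: a circuit of sign `-1`. -/
def IsUnbalancedCircuit (G : SignedGraph V E) (S : Finset E) : Prop :=
  G.IsCircuit S ∧ G.signOf S = -1

/-- `G` is balanced: it contains no unbalanced circuit. -/
def Balanced (G : SignedGraph V E) : Prop :=
  ∀ S : Finset E, G.IsCircuit S → G.signOf S = 1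

/-- `G` is tightly unbalanced: it is unbalanced, but for some edge `f` the
graph `G - f` is balanced. -/
def TightlyUnbalanced (G : SignedGraph V E) : Prop :=
  ¬ G.Balanced ∧ ∃ f : E, ∀ S : Finset E, G.IsCircuit S → f ∉ S → G.signOf S = 1

/-- `G` is eulerian: connected with all valencies even. -/
def Eulerian (G : SignedGraph V E) : Prop :=
  G.Connected ∧ ∀ v : V, Even (G.valency v)

/-- The edge set `S` spans an eulerian subgraph of `G`. -/
def EulerianOn (G : SignedGraph V E) (S : Finset E) : Prop :=
  S.Nonempty ∧ G.ConnOn S ∧ ∀ v : V, Even (G.valencyOn S v)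

/-- An orientation (bidirection) of `G`: `dir e i = true` means that the
half-edge `(e, i)` is directed towards its end-vertex, `dir e i = false` that
it is directed away from it.  Compatibility: a positive edge becomes an
ordinary directed edge (one half-edge in, one out) and a negative edge becomes
a broken (extroverted or introverted) edge. -/
structure Orientation (G : SignedGraph V E) where
  dir : E → Bool → Bool
  compat : ∀ e : E, G.sign e = 1 ↔ dir e false ≠ dir e true

/-- `φ` is a flow on `G` with respect to the orientation `O`: at every vertex
`v`, the sum of values on half-edges directed into `v` equals the sum of
values on half-edges directed out of `v` (Kirchhoff's law). -/
def IsFlow {A : Type} [AddCommGroup A] (G : SignedGraph V E)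
    (O : G.Orientation) (φ : E → A) : Prop :=
  ∀ v : V,
    ∑ p ∈ univ.filter (fun p : E × Bool => G.ends p.1 p.2 = v),
      (if O.dir p.1 p.2 then φ p.1 else -φ p.1) = 0

/-- `G` admits a nowhere-zero `A`-flow. -/
def HasNZFlow (G : SignedGraph V E) (A : Type) [AddCommGroup A] : Prop :=
  ∃ (O : G.Orientation) (φ : E → A), G.IsFlow O φ ∧ ∀ e : E, φ e ≠ 0

/-- `G` is flow-admissible: it admits a nowhere-zero integer flow. -/
def FlowAdmissible (G : SignedGraph V E) : Prop :=
  ∃ (O : G.Orientation) (φ : E → ℤ), G.IsFlow O φ ∧ ∀ e : E, φ e ≠ 0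

/-- `G` admits a nowhere-zero `k`-flow: an integer flow with all values in
`{±1, …, ±(k-1)}`. -/
def HasNZkFlow (G : SignedGraph V E) (k : ℕ) : Prop :=
  ∃ (O : G.Orientation) (φ : E → ℤ), G.IsFlow O φ ∧
    ∀ e : E, φ e ≠ 0 ∧ |φ e| < (k : ℤ)

/-- `G` is triply odd: it can be decomposed into three edge-disjoint eulerian
subgraphs, each with an odd number of negative edges, sharing a common
vertex. -/
def TriplyOdd (G : SignedGraph V E) : Prop :=
  ∃ S₁ S₂ S₃ : Finset E,
    Disjoint S₁ S₂ ∧ Disjoint S₁ S₃ ∧ Disjoint S₂ S₃ ∧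
    S₁ ∪ S₂ ∪ S₃ = univ ∧
    G.EulerianOn S₁ ∧ G.EulerianOn S₂ ∧ G.EulerianOn S₃ ∧
    Odd (G.negEdges S₁).card ∧ Odd (G.negEdges S₂).card ∧
    Odd (G.negEdges S₃).card ∧
    ∃ v : V, v ∈ G.suppV S₁ ∧ v ∈ G.suppV S₂ ∧ v ∈ G.suppV S₃

/-- The edge set `P` spans a (nontrivial) path from `u` to `v`: a connected
subgraph in which `u` and `v` have valency `1` and all other vertices have
valency `2`. -/
def IsPathOn (G : SignedGraph V E) (P : Finset E) (u v : V) : Prop :=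
  u ≠ v ∧ G.ConnOn P ∧ u ∈ G.suppV P ∧ v ∈ G.suppV P ∧
  G.valencyOn P u = 1 ∧ G.valencyOn P v = 1 ∧
  ∀ w ∈ G.suppV P, w ≠ u → w ≠ v → G.valencyOn P w = 2

/-- `T` spans a signed circuit of type (2): the union of two unbalanced
circuits meeting at a single vertex. -/
def IsType2 (G : SignedGraph V E) (T : Finset E) : Prop :=
  ∃ (S₁ S₂ : Finset E) (v : V),
    G.IsUnbalancedCircuit S₁ ∧ G.IsUnbalancedCircuit S₂ ∧ Disjoint S₁ S₂ ∧
    G.suppV S₁ ∩ G.suppV S₂ = {v} ∧ S₁ ∪ S₂ = T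

/-- `T` spans a signed circuit of type (3): the union of two vertex-disjoint
unbalanced circuits together with a path meeting the circuits only at its
ends. -/
def IsType3 (G : SignedGraph V E) (T : Finset E) : Prop :=
  ∃ (S₁ S₂ P : Finset E) (u v : V),
    G.IsUnbalancedCircuit S₁ ∧ G.IsUnbalancedCircuit S₂ ∧
    Disjoint (G.suppV S₁) (G.suppV S₂) ∧
    G.IsPathOn P u v ∧ u ∈ G.suppV S₁ ∧ v ∈ G.suppV S₂ ∧
    G.suppV P ∩ G.suppV S₁ = {u} ∧ G.suppV P ∩ G.suppV S₂ = {v} ∧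
    Disjoint P (S₁ ∪ S₂) ∧ S₁ ∪ S₂ ∪ P = T

/-- `T` spans a signed circuit: a balanced circuit, or a signed circuit of
type (2) or (3). -/
def IsSignedCircuit (G : SignedGraph V E) (T : Finset E) : Prop :=
  G.IsBalancedCircuit T ∨ G.IsType2 T ∨ G.IsType3 T

/-- `T` spans a weak unbalanced bicircuit: two edge-disjoint unbalanced
circuits (not necessarily vertex-disjoint) joined by a possibly trivial path
having no edge in the two circuits. -/
def IsWeakBicircuit (G : SignedGraph V E) (T : Finset E) : Prop :=
  ∃ C₁ C₂ : Finset E,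
    G.IsUnbalancedCircuit C₁ ∧ G.IsUnbalancedCircuit C₂ ∧ Disjoint C₁ C₂ ∧
    (((∃ v : V, v ∈ G.suppV C₁ ∧ v ∈ G.suppV C₂) ∧ T = C₁ ∪ C₂) ∨
      ∃ (P : Finset E) (u v : V),
        G.IsPathOn P u v ∧ u ∈ G.suppV C₁ ∧ v ∈ G.suppV C₂ ∧
        Disjoint P (C₁ ∪ C₂) ∧ T = C₁ ∪ C₂ ∪ P)

/-- Every connected component of `G - f` contains an unbalanced circuit,
i.e. `G - f` has no balanced component. -/
def NoBalancedComponentAvoiding (G : SignedGraph V E) (f : E) : Prop :=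
  ∀ u : V, ∃ S : Finset E,
    G.IsCircuit S ∧ G.signOf S = -1 ∧ f ∉ S ∧
    ∀ w ∈ G.suppV S, Relation.ReflTransGen (G.AdjOn (univ.erase f)) w u

/-- `G` is 2-edge-connected: connected, and still connected after removing
any single edge. -/
def TwoEdgeConnected (G : SignedGraph V E) : Prop :=
  G.Connected ∧ ∀ f : E, ∀ u v : V,
    Relation.ReflTransGen (G.AdjOn (univ.erase f)) u v

/-- `G` is antibalanced: replacing its signature `σ` by `-σ` makes it
balanced. -/
def Antibalanced (G : SignedGraph V E) : Prop :=
  ∀ S : Finset E, G.IsCircuit S → (∏ e ∈ S, (-G.sign e)) = 1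

end SignedGraph

namespace SignedGraph

variable {V E : Type} [Fintype V] [Fintype E] [DecidableEq V] [DecidableEq E]

variable (G : SignedGraph V E)

/-- incidence count of edge e at vertex v -/
def incE (e : E) (v : V) : ℕ :=
  (if G.ends e false = v then 1 else 0) + (if G.ends e true = v then 1 else 0)

lemma valencyOn_eq_sum (S : Finset E) (v : V) :
    G.valencyOn S v = ∑ e ∈ S, G.incE e v := by
  classical
  rw [valencyOn, Finset.card_filter, Fintype.sum_prod_type]
  have : ∀ e : E, (∑ i : Bool, if e ∈ S ∧ G.ends e i = v then 1 else 0) =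
      if e ∈ S then G.incE e v else 0 := by
    intro e
    by_cases he : e ∈ S <;>
      by_cases h1 : G.ends e false = v <;> by_cases h2 : G.ends e true = v <;>
      simp [he, incE, h1, h2, Finset.filter_insert, Finset.filter_singleton]
  rw [Finset.sum_congr rfl fun e _ => this e]
  rw [Finset.sum_ite_mem, Finset.univ_inter]

lemma prod_pow_incE {M : Type} [CommMonoid M] (θ : V → M) (e : E) :
    (∏ v : V, θ v ^ G.incE e v) = θ (G.ends e false) * θ (G.ends e true) := by
  have h : ∀ v, θ v ^ G.incE e v =
      (if G.ends e false = v then θ v else 1) * (if G.ends e true = v then θ v else 1) := by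
    intro v
    rw [incE, pow_add]
    congr 1 <;> split_ifs <;> simp
  rw [Finset.prod_congr rfl fun v _ => h v, Finset.prod_mul_distrib,
    Finset.prod_ite_eq, Finset.prod_ite_eq]
  simp

lemma prod_pow_valencyOn {M : Type} [CommMonoid M] (θ : V → M) (S : Finset E) :
    (∏ v : V, θ v ^ G.valencyOn S v) =
      ∏ e ∈ S, (θ (G.ends e false) * θ (G.ends e true)) := by
  have : ∀ v, θ v ^ G.valencyOn S v = ∏ e ∈ S, θ v ^ G.incE e v := by
    intro v; rw [valencyOn_eq_sum, ← Finset.prod_pow_eq_pow_sum]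
  rw [Finset.prod_congr rfl fun v _ => this v, Finset.prod_comm]
  exact Finset.prod_congr rfl fun e _ => G.prod_pow_incE θ e

lemma units_pow_even (θ : ℤˣ) {n : ℕ} (h : Even n) : θ ^ n = 1 := by
  rcases Int.units_eq_one_or θ with h1 | h1 <;> subst h1
  · simp
  · exact Even.neg_one_pow h

/-- consistent switching on S + even valencies ⇒ product of signs is 1 -/
lemma signOf_eq_one_of_consistent (θ : V → ℤˣ) (S : Finset E)
    (hc : ∀ e ∈ S, G.sign e = θ (G.ends e false) * θ (G.ends e true))
    (hev : ∀ v, Even (G.valencyOn S v)) : G.signOf S = 1 := by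
  have : G.signOf S = ∏ v : V, θ v ^ G.valencyOn S v := by
    rw [prod_pow_valencyOn, signOf]
    exact Finset.prod_congr rfl hc
  rw [this]
  exact Finset.prod_eq_one fun v _ => units_pow_even (θ v) (hev v)

lemma mem_suppV {S : Finset E} {v : V} :
    v ∈ G.suppV S ↔ ∃ e ∈ S, ∃ i : Bool, G.ends e i = v := by
  simp [suppV]

lemma suppV_iff_valency {S : Finset E} {w : V} :
    w ∈ G.suppV S ↔ G.valencyOn S w ≠ 0 := by
  constructor
  · intro h
    obtain ⟨e, he, i, hi⟩ := (G.mem_suppV).1 h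
    rw [valencyOn]
    exact Finset.card_ne_zero_of_mem (Finset.mem_filter.2 ⟨Finset.mem_univ (e, i), he, hi⟩)
  · intro h
    rw [valencyOn, Ne, Finset.card_eq_zero, ← Ne, ← Finset.nonempty_iff_ne_empty] at h
    obtain ⟨⟨e, i⟩, hp⟩ := h
    rw [Finset.mem_filter] at hp
    exact (G.mem_suppV).2 ⟨e, hp.2.1, i, hp.2.2⟩

lemma valencyOn_even_of_circuit {S : Finset E} (h : G.IsCircuit S) (v : V) :
    Even (G.valencyOn S v) := by
  by_cases hv : v ∈ G.suppV S
  · rw [h.2.2 v hv]; exact even_two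
  · rw [G.suppV_iff_valency, not_not] at hv
    rw [hv]; exact Even.zero

lemma adjOn_symm {S : Finset E} {u v : V} (h : G.AdjOn S u v) : G.AdjOn S v u := by
  obtain ⟨e, he, i, h1, h2⟩ := h
  exact ⟨e, he, !i, h2, by rwa [Bool.not_not]⟩

lemma reach_symm {S : Finset E} {u v : V}
    (h : Relation.ReflTransGen (G.AdjOn S) u v) :
    Relation.ReflTransGen (G.AdjOn S) v u :=
  by
    induction h with
    | refl => exact Relation.ReflTransGen.refl
    | tail _ hab ih => exact Relation.ReflTransGen.head (G.adjOn_symm hab) ih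

def WalkP (X : Finset E) : V → List (E × Bool) → V → Prop
  | u, [], v => u = v
  | u, p :: l, v => p.1 ∈ X ∧ G.ends p.1 p.2 = u ∧ WalkP X (G.ends p.1 (!p.2)) l v

def wnext (p : E × Bool) : V := G.ends p.1 (!p.2)

def wverts (u : V) (l : List (E × Bool)) : List V := u :: l.map G.wnext

variable {G}

lemma walk_append {X : Finset E} {l₁ l₂ : List (E × Bool)} {u v : V} :
    G.WalkP X u (l₁ ++ l₂) v ↔ ∃ w, G.WalkP X u l₁ w ∧ G.WalkP X w l₂ v := by
  induction l₁ generalizing u with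
  | nil => simp [WalkP]
  | cons p m ih =>
    simp only [List.cons_append, WalkP, List.append_eq, ih]
    tauto

lemma walk_of_reach {X : Finset E} {u v : V}
    (h : Relation.ReflTransGen (G.AdjOn X) u v) : ∃ l, G.WalkP X u l v := by
  induction h using Relation.ReflTransGen.head_induction_on with
  | refl => exact ⟨[], rfl⟩
  | head h' _ ih =>
    obtain ⟨e, he, i, h1, h2⟩ := h'
    obtain ⟨l, hl⟩ := ih
    exact ⟨(e, i) :: l, he, h1, by rwa [h2]⟩

lemma walk_edges_mem {X : Finset E} {l : List (E × Bool)} {u v : V}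
    (h : G.WalkP X u l v) : ∀ p ∈ l, p.1 ∈ X := by
  induction l generalizing u with
  | nil => simp
  | cons p m ih =>
    obtain ⟨h1, _, h3⟩ := h
    intro q hq
    rcases List.mem_cons.1 hq with rfl | hq'
    · exact h1
    · exact ih h3 q hq'

lemma walk_last_mem {X : Finset E} {l : List (E × Bool)} {u v : V}
    (h : G.WalkP X u l v) : v ∈ G.wverts u l := by
  induction l generalizing u with
  | nil => have h' : u = v := h; subst h'; simp [wverts]
  | cons p m ih =>
    obtain ⟨_, _, h3⟩ := h
    have := ih h3
    simp only [wverts, List.map_cons, List.mem_cons] at this ⊢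
    tauto

lemma walk_reach_mem {X S : Finset E} {l : List (E × Bool)} {u v : V}
    (h : G.WalkP X u l v) (hS : ∀ p ∈ l, p.1 ∈ S) :
    ∀ w ∈ G.wverts u l, Relation.ReflTransGen (G.AdjOn S) u w := by
  induction l generalizing u with
  | nil => intro w hw; simp [wverts] at hw; subst hw; rfl
  | cons p m ih =>
    obtain ⟨h1, h2, h3⟩ := h
    intro w hw
    simp only [wverts, List.map_cons, List.mem_cons] at hw
    have hstep : G.AdjOn S u (G.wnext p) :=
      ⟨p.1, hS p List.mem_cons_self, p.2, h2, rfl⟩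
    rcases hw with rfl | hw
    · rfl
    · have : w ∈ G.wverts (G.wnext p) m := by
        simp only [wverts, List.mem_cons]; exact hw
      exact Relation.ReflTransGen.head hstep
        (ih h3 (fun q hq => hS q (List.mem_cons_of_mem _ hq)) w this)

lemma not_nodup_map_split {α β : Type} {l : List α} {f : α → β}
    (h : ¬ (l.map f).Nodup) : ∃ s p t, l = s ++ p :: t ∧ f p ∈ t.map f := by
  induction l with
  | nil => simp at h
  | cons q m ih =>
    rw [List.map_cons, List.nodup_cons] at h
    push_neg at h
    by_cases hq : f q ∈ m.map f
    · exact ⟨[], q, m, rfl, hq⟩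
    · obtain ⟨s, p, t, rfl, hp⟩ := ih (h hq)
      exact ⟨q :: s, p, t, rfl, hp⟩

lemma walk_shorten {X : Finset E} {l : List (E × Bool)} {u v : V}
    (h : G.WalkP X u l v) (hnd : ¬ (G.wverts u l).Nodup) :
    ∃ l', G.WalkP X u l' v ∧ l'.length < l.length := by
  rw [wverts, List.nodup_cons] at hnd
  push_neg at hnd
  by_cases hu : u ∈ l.map G.wnext
  · obtain ⟨p, hp, hpu⟩ := List.mem_map.1 hu
    obtain ⟨s, t, rfl⟩ := List.append_of_mem hp
    obtain ⟨w, _, hw2⟩ := walk_append.1 h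
    obtain ⟨_, _, h3⟩ := hw2
    rw [wnext] at hpu
    rw [hpu] at h3
    exact ⟨t, h3, by simp; omega⟩
  · obtain ⟨s, p, t, rfl, hpt⟩ := not_nodup_map_split (hnd hu)
    obtain ⟨q, hq, hqp⟩ := List.mem_map.1 hpt
    obtain ⟨t₁, t₂, rfl⟩ := List.append_of_mem hq
    obtain ⟨w, hw1, hw2⟩ := walk_append.1 h
    obtain ⟨hp1, hp2, hp3⟩ := hw2
    obtain ⟨w₂, _, hw4⟩ := walk_append.1 hp3
    obtain ⟨_, _, hq3⟩ := hw4
    rw [wnext, wnext] at hqp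
    rw [hqp] at hq3
    refine ⟨s ++ p :: t₂, walk_append.2 ⟨w, hw1, hp1, hp2, hq3⟩, ?_⟩
    simp

lemma walk_nodup {X : Finset E} {u v : V} :
    ∀ (n : ℕ) (l : List (E × Bool)), l.length ≤ n → G.WalkP X u l v →
      ∃ l', G.WalkP X u l' v ∧ (G.wverts u l').Nodup := by
  intro n
  induction n with
  | zero =>
    intro l hl h
    rw [Nat.le_zero, List.length_eq_zero_iff] at hl
    subst hl
    exact ⟨[], h, by simp [wverts]⟩
  | succ n ih =>
    intro l hl h
    by_cases hnd : (G.wverts u l).Nodup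
    · exact ⟨l, h, hnd⟩
    · obtain ⟨l', h', hlen⟩ := walk_shorten h hnd
      exact ih l' (by omega) h'

lemma walk_edges_nodup {X : Finset E} {l : List (E × Bool)} {u v : V}
    (h : G.WalkP X u l v) (hnd : (G.wverts u l).Nodup) :
    (l.map Prod.fst).Nodup := by
  induction l generalizing u with
  | nil => simp
  | cons p m ih =>
    obtain ⟨h1, h2, h3⟩ := h
    have hnd' : (G.wverts (G.ends p.1 (!p.2)) m).Nodup := by
      rw [wverts, List.map_cons, List.nodup_cons] at hnd
      exact hnd.2
    rw [List.map_cons, List.nodup_cons]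
    refine ⟨?_, ih h3 hnd'⟩
    intro hmem
    obtain ⟨q, hq, hqp⟩ := List.mem_map.1 hmem
    rw [wverts, List.map_cons] at hnd
    have hu : u ∉ (G.wnext p :: m.map G.wnext) := (List.nodup_cons.1 hnd).1
    have hw : G.wnext p ∉ m.map G.wnext := (List.nodup_cons.1 (List.nodup_cons.1 hnd).2).1
    have hqmem : G.wnext q ∈ m.map G.wnext := List.mem_map_of_mem hq
    rcases Bool.eq_or_eq_not (!q.2) p.2 with hb | hb
    · apply hu
      have : G.wnext q = u := by rw [wnext, hqp, hb, h2]
      rw [← this]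
      exact List.mem_cons_of_mem _ hqmem
    · apply hw
      have : G.wnext q = G.wnext p := by rw [wnext, hqp, hb, wnext]
      rwa [← this]

lemma walk_sign_prod {X : Finset E} {θ : V → ℤˣ}
    (hθ : ∀ e ∈ X, G.sign e = θ (G.ends e false) * θ (G.ends e true))
    {l : List (E × Bool)} {u v : V} (h : G.WalkP X u l v) :
    (l.map fun p => G.sign p.1).prod = θ u * θ v := by
  induction l generalizing u with
  | nil =>
    have h' : u = v := h
    subst h'
    simp only [List.map_nil, List.prod_nil]
    exact (Int.units_mul_self (θ u)).symm
  | cons p m ih =>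
    obtain ⟨h1, h2, h3⟩ := h
    rw [List.map_cons, List.prod_cons, ih h3]
    have hsp : G.sign p.1 = θ u * θ (G.ends p.1 (!p.2)) := by
      rw [hθ p.1 h1]
      rcases Bool.eq_false_or_eq_true p.2 with hb | hb <;>
        rw [hb] at h2 ⊢ <;> simp only [Bool.not_false, Bool.not_true] <;>
        rw [← h2]
      exact mul_comm _ _
    rw [hsp, mul_assoc, ← mul_assoc (θ (G.ends p.1 (!p.2))), Int.units_mul_self, one_mul]

lemma walk_inc_sum {X : Finset E} {l : List (E × Bool)} {u v : V}
    (h : G.WalkP X u l v) (hnd : (G.wverts u l).Nodup) (w : V) :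
    (l.map fun p => G.incE p.1 w).sum + (if u = w then 1 else 0) + (if v = w then 1 else 0)
      = if w ∈ G.wverts u l then 2 else 0 := by
  induction l generalizing u with
  | nil =>
    have h' : u = v := h; subst h'
    by_cases hw : u = w
    · subst hw; simp [wverts]
    · have hw' : w ∉ G.wverts u [] := by
        simp only [wverts, List.map_nil, List.mem_singleton]
        exact fun hc => hw hc.symm
      simp [hw, hw']
  | cons p m ih =>
    obtain ⟨h1, h2, h3⟩ := h
    have hnd' : (G.wverts (G.ends p.1 (!p.2)) m).Nodup := by
      rw [wverts, List.map_cons, List.nodup_cons] at hnd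
      exact hnd.2
    have hIH := ih h3 hnd' 
    have hinc : G.incE p.1 w =
        (if u = w then 1 else 0) + (if G.ends p.1 (!p.2) = w then 1 else 0) := by
      rw [incE]
      rcases Bool.eq_false_or_eq_true p.2 with hb | hb <;> rw [hb] at h2
      · rw [← h2, hb]
        simp only [Bool.not_true]
        exact add_comm _ _
      · rw [← h2, hb]
        simp only [Bool.not_false]
    have hv1 : G.wverts u (p :: m) = u :: G.wverts (G.ends p.1 (!p.2)) m := rfl
    rw [List.map_cons, List.sum_cons, hinc, hv1]
    have hu_tail : u ∉ G.wverts (G.ends p.1 (!p.2)) m := by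
      rw [hv1, List.nodup_cons] at hnd
      exact hnd.1
    by_cases hu : u = w
    · by_cases hw2 : w ∈ G.wverts (G.ends p.1 (!p.2)) m
      · exact absurd hw2 (hu ▸ hu_tail)
      · have hm1 : w ∈ u :: G.wverts (G.ends p.1 (!p.2)) m := by
          rw [← hu]; exact List.mem_cons_self
        rw [if_pos hm1, if_pos hu]
        rw [if_neg hw2] at hIH
        omega
    · rw [if_neg hu]
      by_cases hw2 : w ∈ G.wverts (G.ends p.1 (!p.2)) m
      · rw [if_pos (List.mem_cons_of_mem _ hw2)]
        rw [if_pos hw2] at hIH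
        omega
      · have hm2 : w ∉ u :: G.wverts (G.ends p.1 (!p.2)) m := by
          rw [List.mem_cons]
          push_neg
          exact ⟨fun hc => hu hc.symm, hw2⟩
        rw [if_neg hm2]
        rw [if_neg hw2] at hIH
        omega

lemma exists_unbalanced_circuit {X : Finset E} {e₀ : E} (he : e₀ ∉ X)
    (hreach : Relation.ReflTransGen (G.AdjOn X) (G.ends e₀ false) (G.ends e₀ true))
    {θ : V → ℤˣ} (hθ : ∀ e ∈ X, G.sign e = θ (G.ends e false) * θ (G.ends e true))
    (hs : G.sign e₀ = -(θ (G.ends e₀ false) * θ (G.ends e₀ true))) :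
    ∃ S : Finset E, G.IsCircuit S ∧ S ⊆ insert e₀ X ∧ G.signOf S = -1 := by
  classical
  obtain ⟨l₀, hw₀⟩ := walk_of_reach hreach
  obtain ⟨l, hw, hnd⟩ := walk_nodup l₀.length l₀ le_rfl hw₀
  set T : Finset E := (l.map Prod.fst).toFinset with hT
  have hTX : ∀ e ∈ T, e ∈ X := by
    intro e hem
    obtain ⟨p, hp, rfl⟩ := List.mem_map.1 (List.mem_toFinset.1 hem)
    exact walk_edges_mem hw p hp
  have he₀T : e₀ ∉ T := fun hmem => he (hTX _ hmem)
  have hedg : (l.map Prod.fst).Nodup := walk_edges_nodup hw hnd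
  have hsign : G.signOf (insert e₀ T) = -1 := by
    rw [signOf, Finset.prod_insert he₀T]
    have hPT : ∏ e ∈ T, G.sign e = θ (G.ends e₀ false) * θ (G.ends e₀ true) := by
      rw [hT, List.prod_toFinset _ hedg, List.map_map]
      exact walk_sign_prod hθ hw
    rw [hPT, hs, neg_mul, Int.units_mul_self]
  have hval : ∀ w, G.valencyOn (insert e₀ T) w =
      if w ∈ G.wverts (G.ends e₀ false) l then 2 else 0 := by
    intro w
    have h1 : G.valencyOn (insert e₀ T) w = G.incE e₀ w + ∑ e ∈ T, G.incE e w := by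
      rw [valencyOn_eq_sum, Finset.sum_insert he₀T]
    have h2 : ∑ e ∈ T, G.incE e w = (l.map fun p => G.incE p.1 w).sum := by
      rw [hT, List.sum_toFinset _ hedg, List.map_map]
      rfl
    have h3 := walk_inc_sum hw hnd w
    have hincE : G.incE e₀ w =
        (if G.ends e₀ false = w then 1 else 0) + (if G.ends e₀ true = w then 1 else 0) := rfl
    rw [h1, h2, hincE]
    set A := (l.map fun p => G.incE p.1 w).sum
    set i1 := if G.ends e₀ false = w then 1 else 0
    set i2 := if G.ends e₀ true = w then 1 else 0
    set q := if w ∈ G.wverts (G.ends e₀ false) l then 2 else 0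
    omega
  have hsupp : ∀ w, w ∈ G.suppV (insert e₀ T) ↔ w ∈ G.wverts (G.ends e₀ false) l := by
    intro w
    rw [G.suppV_iff_valency, hval w]
    by_cases hm : w ∈ G.wverts (G.ends e₀ false) l <;> simp [hm]
  refine ⟨insert e₀ T, ⟨⟨e₀, Finset.mem_insert_self _ _⟩, ?_, ?_⟩, ?_, hsign⟩
  · intro u' hu' v' hv'
    have hu'' := (hsupp u').1 hu'
    have hv'' := (hsupp v').1 hv'
    have hedges : ∀ p ∈ l, p.1 ∈ insert e₀ T :=
      fun p hp => Finset.mem_insert_of_mem (List.mem_toFinset.2 (List.mem_map_of_mem hp))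
    exact (G.reach_symm (walk_reach_mem hw hedges u' hu'')).trans (walk_reach_mem hw hedges v' hv'')
  · intro w hw'
    rw [hval w, if_pos ((hsupp w).1 hw')]
  · intro e hem
    rcases Finset.mem_insert.1 hem with rfl | hmem
    · exact Finset.mem_insert_self _ _
    · exact Finset.mem_insert_of_mem (hTX e hmem)

lemma exists_switching : ∀ (X : Finset E),
    (∀ S, G.IsCircuit S → S ⊆ X → G.signOf S = 1) →
    ∃ θ : V → ℤˣ, ∀ e ∈ X, G.sign e = θ (G.ends e false) * θ (G.ends e true) := by
  classical
  intro X
  induction X using Finset.induction_on with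
  | empty => intro _; exact ⟨fun _ => 1, by simp⟩
  | @insert e₀ X he₀ ih =>
    intro hX
    obtain ⟨θ, hθ⟩ := ih (fun S hS hsub => hX S hS (hsub.trans (Finset.subset_insert _ _)))
    by_cases h1 : G.sign e₀ = θ (G.ends e₀ false) * θ (G.ends e₀ true)
    · refine ⟨θ, fun e he => ?_⟩
      rcases Finset.mem_insert.1 he with rfl | heX
      · exact h1
      · exact hθ e heX
    · have hs : G.sign e₀ = -(θ (G.ends e₀ false) * θ (G.ends e₀ true)) :=
        Int.units_ne_iff_eq_neg.1 h1
      by_cases h2 : Relation.ReflTransGen (G.AdjOn X) (G.ends e₀ false) (G.ends e₀ true)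
      · obtain ⟨S, hc, hsub, hneg⟩ := exists_unbalanced_circuit he₀ h2 hθ hs
        have := hX S hc hsub
        rw [hneg] at this
        exact absurd this (by decide)
      · refine ⟨fun v => if Relation.ReflTransGen (G.AdjOn X) (G.ends e₀ false) v then -θ v
          else θ v, fun e he => ?_⟩
        rcases Finset.mem_insert.1 he with rfl | heX
        · dsimp only
          split_ifs with hA hB hB
          all_goals first
            | exact absurd hB h2
            | exact absurd Relation.ReflTransGen.refl hA
            | rw [hs, neg_mul]
        · dsimp only
          have hiff : Relation.ReflTransGen (G.AdjOn X) (G.ends e₀ false) (G.ends e false) ↔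
              Relation.ReflTransGen (G.AdjOn X) (G.ends e₀ false) (G.ends e true) := by
            constructor
            · intro h
              exact h.tail ⟨e, heX, false, rfl, rfl⟩
            · intro h
              exact h.tail ⟨e, heX, true, rfl, rfl⟩
          by_cases hr : Relation.ReflTransGen (G.AdjOn X) (G.ends e₀ false) (G.ends e false)
          · rw [if_pos hr, if_pos (hiff.1 hr), hθ e heX, neg_mul_neg]
          · rw [if_neg hr, if_neg (fun hc => hr (hiff.2 hc)), hθ e heX]

end SignedGraph



namespace SignedGraph

variable {V E : Type} [Fintype V] [Fintype E] [DecidableEq V] [DecidableEq E]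
variable {G : SignedGraph V E}

lemma units_eq_of_mul_eq_one {u w : ℤˣ} (h : u * w = 1) : u = w := by
  rcases Int.units_eq_one_or u with rfl | rfl <;>
    rcases Int.units_eq_one_or w with rfl | rfl <;> simp_all

lemma card_pair_fiber (e' : E) (K : Finset V) (P : E × Bool → Prop) [DecidablePred P] :
    ((univ.filter fun p : E × Bool => G.ends p.1 p.2 ∈ K ∧ P p).filter fun p => p.1 = e').card
      = (univ.filter fun i : Bool => G.ends e' i ∈ K ∧ P (e', i)).card := by
  refine Finset.card_bij' (fun p _ => p.2) (fun i _ => (e', i)) ?_ ?_ ?_ ?_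
  · intro p hp
    simp only [Finset.mem_filter, Finset.mem_univ, true_and] at hp ⊢
    obtain ⟨⟨h1, h2⟩, h3⟩ := hp
    subst h3
    exact ⟨h1, h2⟩
  · intro i hi
    simp only [Finset.mem_filter, Finset.mem_univ, true_and] at hi ⊢
    exact ⟨⟨hi.1, hi.2⟩, trivial⟩
  · intro p hp
    simp only [Finset.mem_filter, Finset.mem_univ, true_and] at hp
    exact Prod.ext hp.2.symm rfl
  · intro i _
    rfl

lemma bridge (hconn : G.Connected) (hev : ∀ v, Even (G.valency v)) (e : E) (u v : V) :
    Relation.ReflTransGen (G.AdjOn (univ.erase e)) u v := by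
  classical
  set R : V → Prop := fun w => Relation.ReflTransGen (G.AdjOn (univ.erase e)) (G.ends e false) w
    with hR
  set K : Finset V := univ.filter R with hK
  have hclaim1 : ∀ e', e' ≠ e → ∀ i : Bool, G.ends e' i ∈ K → G.ends e' (!i) ∈ K := by
    intro e' hne i hi
    rw [hK, Finset.mem_filter] at hi ⊢
    exact ⟨Finset.mem_univ _,
      hi.2.tail ⟨e', Finset.mem_erase.2 ⟨hne, Finset.mem_univ _⟩, i, rfl, rfl⟩⟩
  have hcard : ∀ e', e' ≠ e → Even (univ.filter fun i : Bool => G.ends e' i ∈ K).card := by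
    intro e' hne
    by_cases hf : G.ends e' false ∈ K
    · have ht : G.ends e' true ∈ K := by simpa using hclaim1 e' hne false hf
      have huniv : (univ.filter fun i : Bool => G.ends e' i ∈ K) = univ := by
        ext i
        simp only [Finset.mem_filter, Finset.mem_univ, true_and, iff_true]
        cases i
        · exact hf
        · exact ht
      rw [huniv]
      decide
    · have ht : G.ends e' true ∉ K := fun h => hf (by simpa using hclaim1 e' hne true h)
      have hemp : (univ.filter fun i : Bool => G.ends e' i ∈ K) = ∅ := by
        ext i
        simp only [Finset.mem_filter, Finset.mem_univ, true_and, Finset.notMem_empty,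
          iff_false]
        cases i
        · exact hf
        · exact ht
      rw [hemp]
      simp
  -- total incidence count into K
  have hvalK : ∀ w, G.valency w = (univ.filter fun p : E × Bool => G.ends p.1 p.2 = w).card := by
    intro w
    rw [valency, valencyOn]
    congr 1
    ext p
    simp
  have hA : (univ.filter fun p : E × Bool => G.ends p.1 p.2 ∈ K).card = ∑ w ∈ K, G.valency w := by
    rw [Finset.card_eq_sum_card_fiberwise
      (s := univ.filter fun p : E × Bool => G.ends p.1 p.2 ∈ K)
      (f := fun p : E × Bool => G.ends p.1 p.2) (t := K)
      (fun p hp => (Finset.mem_filter.1 hp).2)]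
    apply Finset.sum_congr rfl
    intro w hwK
    rw [hvalK w]
    congr 1
    ext p
    simp only [Finset.mem_filter, Finset.mem_univ, true_and]
    constructor
    · rintro ⟨_, h2⟩; exact h2
    · intro h; rw [h]; exact ⟨hwK, rfl⟩
  have hAeven : Even (univ.filter fun p : E × Bool => G.ends p.1 p.2 ∈ K).card := by
    rw [hA]
    exact Finset.even_sum _ fun w _ => hev w
  -- split: p.1 = e or not
  have hsplit := Finset.card_filter_add_card_filter_not
    (s := univ.filter fun p : E × Bool => G.ends p.1 p.2 ∈ K) (p := fun p => p.1 = e)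
  have hfilter_comm : ∀ (Q : E × Bool → Prop) [DecidablePred Q],
      (univ.filter fun p : E × Bool => G.ends p.1 p.2 ∈ K).filter Q
        = (univ.filter fun p : E × Bool => G.ends p.1 p.2 ∈ K ∧ Q p).filter Q := by
    intro Q _
    ext p
    simp only [Finset.mem_filter, Finset.mem_univ, true_and]
    tauto
  have hA2 : Even ((univ.filter fun p : E × Bool => G.ends p.1 p.2 ∈ K).filter
      fun p => ¬ p.1 = e).card := by
    rw [hfilter_comm]
    rw [Finset.card_eq_sum_card_fiberwise
      (s := (univ.filter fun p : E × Bool => G.ends p.1 p.2 ∈ K ∧ ¬ p.1 = e).filter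
        fun p => ¬ p.1 = e) (f := Prod.fst) (t := univ.erase e)
      (fun p hp => by
        simp only [Finset.mem_coe, Finset.mem_filter] at hp
        exact Finset.mem_erase.2 ⟨hp.1.2.2, Finset.mem_univ _⟩)]
    apply Finset.even_sum
    intro e' he'
    have he'ne : e' ≠ e := (Finset.mem_erase.1 he').1
    have hfib : ((univ.filter fun p : E × Bool => G.ends p.1 p.2 ∈ K ∧ ¬ p.1 = e).filter
        fun p => ¬ p.1 = e).filter (fun p => p.1 = e')
        = (univ.filter fun p : E × Bool => G.ends p.1 p.2 ∈ K ∧ ¬ p.1 = e).filter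
          (fun p => p.1 = e') := by
      ext p
      simp only [Finset.mem_filter, Finset.mem_univ, true_and]
      tauto
    rw [hfib, card_pair_fiber e' K (fun p => ¬ p.1 = e)]
    have : (univ.filter fun i : Bool => G.ends e' i ∈ K ∧ ¬ (e', i).1 = e)
        = univ.filter fun i : Bool => G.ends e' i ∈ K := by
      ext i
      simp only [Finset.mem_filter, Finset.mem_univ, true_and]
      exact ⟨fun h => h.1, fun h => ⟨h, he'ne⟩⟩
    rw [this]
    exact hcard e' he'ne
  have hA1card : ((univ.filter fun p : E × Bool => G.ends p.1 p.2 ∈ K).filter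
      fun p => p.1 = e).card = (univ.filter fun i : Bool => G.ends e i ∈ K).card := by
    rw [hfilter_comm]
    have hfib : ((univ.filter fun p : E × Bool => G.ends p.1 p.2 ∈ K ∧ p.1 = e).filter
        fun p => p.1 = e) = (univ.filter fun p : E × Bool => G.ends p.1 p.2 ∈ K ∧ p.1 = e) := by
      ext p
      simp only [Finset.mem_filter, Finset.mem_univ, true_and]
      tauto
    rw [hfib]
    have := card_pair_fiber (G := G) e K (fun p => p.1 = e)
    -- restate: LHS of `this` is filter(filter); adjust
    have h2 : ((univ.filter fun p : E × Bool => G.ends p.1 p.2 ∈ K ∧ p.1 = e).filter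
        fun p => p.1 = e) = (univ.filter fun p : E × Bool => G.ends p.1 p.2 ∈ K ∧ p.1 = e) := by
      ext p
      simp only [Finset.mem_filter, Finset.mem_univ, true_and]
      tauto
    rw [← h2, this]
    congr 1
    ext i
    simp only [Finset.mem_filter, Finset.mem_univ, true_and]
    tauto
  have hA1even : Even ((univ.filter fun p : E × Bool => G.ends p.1 p.2 ∈ K).filter
      fun p => p.1 = e).card := by
    rcases hAeven with ⟨m, hm⟩
    rcases hA2 with ⟨k, hk⟩
    exact ⟨m - k, by omega⟩
  have hfalseK : G.ends e false ∈ K := by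
    rw [hK, Finset.mem_filter]
    exact ⟨Finset.mem_univ _, Relation.ReflTransGen.refl⟩
  have htrueK : G.ends e true ∈ K := by
    by_contra htr
    have : (univ.filter fun i : Bool => G.ends e i ∈ K) = {false} := by
      ext i
      simp only [Finset.mem_filter, Finset.mem_univ, true_and, Finset.mem_singleton]
      cases i
      · simp [hfalseK]
      · simp [htr]
    rw [hA1card, this] at hA1even
    simp at hA1even
  -- every vertex is in K
  have hall : ∀ w, R w := by
    intro w
    have hcw := hconn.2 (G.ends e false) w
    induction hcw with
    | refl => exact Relation.ReflTransGen.refl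
    | tail _ step ih =>
      obtain ⟨e₁, _, i, hbi, hci⟩ := step
      by_cases he₁ : e₁ = e
      · subst he₁
        rcases Bool.eq_false_or_eq_true i with hb | hb <;> subst hb
        · rw [← hci]
          simp only [Bool.not_true]
          exact (Finset.mem_filter.1 hfalseK).2
        · rw [← hci]
          simp only [Bool.not_false]
          exact (Finset.mem_filter.1 htrueK).2
      · exact ih.tail ⟨e₁, Finset.mem_erase.2 ⟨he₁, Finset.mem_univ _⟩, i, hbi, hci⟩
  exact (G.reach_symm (hall u)).trans (hall v)

end SignedGraph


namespace SignedGraph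

variable {V E : Type} [Fintype V] [Fintype E] [DecidableEq V] [DecidableEq E]
variable {G : SignedGraph V E}

/-- the coefficient of `y` against edge `e'` -/
def Dval {R : Type} [Ring R] (O : G.Orientation) (y : V → R) (e' : E) : R :=
  (if O.dir e' false then y (G.ends e' false) else -y (G.ends e' false))
    + (if O.dir e' true then y (G.ends e' true) else -y (G.ends e' true))

lemma dval_spec {R : Type} [Ring R] (O : G.Orientation) (y : V → R) (e' : E) :
    (G.sign e' = 1 ∧ (Dval O y e' = y (G.ends e' false) - y (G.ends e' true) ∨
        Dval O y e' = y (G.ends e' true) - y (G.ends e' false)))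
      ∨ (G.sign e' = -1 ∧ (Dval O y e' = y (G.ends e' false) + y (G.ends e' true) ∨
        Dval O y e' = -(y (G.ends e' false) + y (G.ends e' true)))) := by
  have hT : ∀ z : R, (if (true : Bool) = true then z else -z) = z := fun z => rfl
  have hF : ∀ z : R, (if (false : Bool) = true then z else -z) = -z := fun z => rfl
  rcases Int.units_eq_one_or (G.sign e') with hs | hs
  · left
    refine ⟨hs, ?_⟩
    have hd := (O.compat e').1 hs
    rw [Dval]
    cases h1 : O.dir e' false <;> cases h2 : O.dir e' true <;> rw [h1, h2] at hd
    · exact absurd rfl hd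
    · rw [hF, hT]; right; abel
    · rw [hT, hF]; left; abel
    · exact absurd rfl hd
  · right
    refine ⟨hs, ?_⟩
    have hd : O.dir e' false = O.dir e' true := by
      by_contra hne
      have := (O.compat e').2 hne
      rw [this] at hs
      exact absurd hs (by decide)
    rw [Dval]
    cases h1 : O.dir e' false <;> cases h2 : O.dir e' true <;> rw [h1, h2] at hd
    · rw [hF, hF]; right; abel
    · exact absurd hd (by simp)
    · exact absurd hd (by simp)
    · rw [hT, hT]; exact Or.inl rfl

lemma abs_eq_of_dval_zero {O : G.Orientation} {y : V → ℚ} {e' : E}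
    (h : Dval O y e' = 0) : |y (G.ends e' false)| = |y (G.ends e' true)| := by
  rcases dval_spec O y e' with ⟨_, h2 | h2⟩ | ⟨_, h2 | h2⟩ <;> rw [h] at h2 <;>
    [skip; skip; skip; skip] <;>
    (first
      | (have : y (G.ends e' false) = y (G.ends e' true) := by linarith
         rw [this])
      | (have : y (G.ends e' false) = -y (G.ends e' true) := by linarith
         rw [this, abs_neg]))

lemma swap_sum {R : Type} [CommRing R] (O : G.Orientation) (y : V → R) (x : E → R) :
    (∑ v : V, y v * (∑ p ∈ univ.filter (fun p : E × Bool => G.ends p.1 p.2 = v),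
        (if O.dir p.1 p.2 then x p.1 else -x p.1)))
      = ∑ e' : E, x e' * Dval O y e' := by
  have h1 : ∀ v, y v * (∑ p ∈ univ.filter (fun p : E × Bool => G.ends p.1 p.2 = v),
      (if O.dir p.1 p.2 then x p.1 else -x p.1))
      = ∑ p ∈ univ.filter (fun p : E × Bool => G.ends p.1 p.2 = v),
        y (G.ends p.1 p.2) * (if O.dir p.1 p.2 then x p.1 else -x p.1) := by
    intro v
    rw [Finset.mul_sum]
    apply Finset.sum_congr rfl
    intro p hp
    rw [(Finset.mem_filter.1 hp).2]
  rw [Finset.sum_congr rfl fun v _ => h1 v]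
  rw [Finset.sum_fiberwise (univ : Finset (E × Bool)) (fun p : E × Bool => G.ends p.1 p.2)
    (fun p : E × Bool => y (G.ends p.1 p.2) * (if O.dir p.1 p.2 then x p.1 else -x p.1))]
  rw [Fintype.sum_prod_type]
  apply Finset.sum_congr rfl
  intro e' _
  rw [Fintype.sum_bool, Dval]
  by_cases d1 : O.dir e' false <;> by_cases d2 : O.dir e' true <;>
    simp [d1, d2] <;> ring

/-- incidence matrix over ℚ -/
def flowMat (O : G.Orientation) : Matrix V E ℚ := fun v e' =>
  ∑ i : Bool, (if G.ends e' i = v then (if O.dir e' i then (1 : ℚ) else -1) else 0)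

lemma mulVec_eq_flowSum (O : G.Orientation) (x : E → ℚ) (v : V) :
    (flowMat (G := G) O).mulVec x v
      = ∑ p ∈ univ.filter (fun p : E × Bool => G.ends p.1 p.2 = v),
        (if O.dir p.1 p.2 then x p.1 else -x p.1) := by
  rw [Finset.sum_filter, Fintype.sum_prod_type]
  rw [Matrix.mulVec, dotProduct]
  apply Finset.sum_congr rfl
  intro e' _
  rw [flowMat, Finset.sum_mul]
  apply Finset.sum_congr rfl
  intro i _
  by_cases h1 : G.ends e' i = v <;> by_cases h2 : O.dir e' i <;>
    simp [h1, h2]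

lemma isFlow_iff_mulVec (O : G.Orientation) (x : E → ℚ) :
    G.IsFlow O x ↔ (flowMat (G := G) O).mulVecLin x = 0 := by
  rw [IsFlow]
  constructor
  · intro h
    funext v
    rw [Matrix.mulVecLin_apply, mulVec_eq_flowSum, h v]
    rfl
  · intro h v
    have := congrFun h v
    rw [Matrix.mulVecLin_apply, mulVec_eq_flowSum] at this
    exact this

lemma exists_dual {e : E} (B : (E → ℚ) →ₗ[ℚ] (V → ℚ))
    (h : ∀ x, B x = 0 → x e = 0) :
    ∃ y : V → ℚ, ∀ x, x e = ∑ v, y v * B x v := by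
  classical
  have hker : LinearMap.ker B ≤ LinearMap.ker (LinearMap.proj e (R := ℚ) (φ := fun _ : E => ℚ)) := by
    intro x hx
    rw [LinearMap.mem_ker] at hx ⊢
    exact h x hx
  obtain ⟨q, hq⟩ := Submodule.exists_isCompl (LinearMap.range B)
  set π := (LinearMap.range B).linearProjOfIsCompl q hq with hπ
  set lift := (LinearMap.ker B).liftQ (LinearMap.proj e) hker with hlift
  set h' : (V → ℚ) →ₗ[ℚ] ℚ :=
    lift.comp (((B.quotKerEquivRange.symm : LinearMap.range B ≃ₗ[ℚ] _) :
      LinearMap.range B →ₗ[ℚ] _).comp π) with hh'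
  have key : ∀ x : E → ℚ, h' (B x) = x e := by
    intro x
    have h1 : π (B x) = ⟨B x, LinearMap.mem_range_self B x⟩ :=
      Submodule.linearProjOfIsCompl_apply_left hq ⟨B x, LinearMap.mem_range_self B x⟩
    have h2 : B.quotKerEquivRange.symm ⟨B x, LinearMap.mem_range_self B x⟩
        = Submodule.Quotient.mk x := by
      rw [LinearEquiv.symm_apply_eq]
      exact Subtype.ext (LinearMap.quotKerEquivRange_apply_mk B x)
    rw [hh']
    simp only [LinearMap.comp_apply, LinearEquiv.coe_coe]
    rw [h1, h2, hlift, Submodule.liftQ_apply, LinearMap.proj_apply]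
  refine ⟨fun v => h' (fun w => if v = w then 1 else 0), fun x => ?_⟩
  have hpi := LinearMap.pi_apply_eq_sum_univ h' (B x)
  rw [← key x, hpi]
  apply Finset.sum_congr rfl
  intro v _
  rw [smul_eq_mul, mul_comm]

noncomputable def stdOrient (G : SignedGraph V E) : G.Orientation where
  dir := fun e i => if i = true then (if G.sign e = 1 then true else false) else false
  compat := by
    intro e
    by_cases h : G.sign e = 1 <;> simp [h]

lemma isFlow_zero (O : G.Orientation) : G.IsFlow O (fun _ => (0 : ℤ)) := by
  intro v
  simp

lemma isFlow_add_smul (O : G.Orientation) (φ ψ : E → ℤ) (N : ℤ)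
    (hφ : G.IsFlow O φ) (hψ : G.IsFlow O ψ) :
    G.IsFlow O (fun e => φ e + N * ψ e) := by
  intro v
  have key : ∀ p : E × Bool,
      (if O.dir p.1 p.2 then φ p.1 + N * ψ p.1 else -(φ p.1 + N * ψ p.1))
        = (if O.dir p.1 p.2 then φ p.1 else -φ p.1)
          + N * (if O.dir p.1 p.2 then ψ p.1 else -ψ p.1) := by
    intro p
    by_cases hd : O.dir p.1 p.2 <;> simp [hd] <;> ring
  calc ∑ p ∈ univ.filter (fun p : E × Bool => G.ends p.1 p.2 = v),
        (if O.dir p.1 p.2 then φ p.1 + N * ψ p.1 else -(φ p.1 + N * ψ p.1))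
      = (∑ p ∈ univ.filter (fun p : E × Bool => G.ends p.1 p.2 = v),
          (if O.dir p.1 p.2 then φ p.1 else -φ p.1))
        + N * ∑ p ∈ univ.filter (fun p : E × Bool => G.ends p.1 p.2 = v),
          (if O.dir p.1 p.2 then ψ p.1 else -ψ p.1) := by
        rw [Finset.mul_sum, ← Finset.sum_add_distrib]
        exact Finset.sum_congr rfl fun p _ => key p
    _ = 0 := by rw [hφ v, hψ v]; ring

lemma combine (O : G.Orientation)
    (hex : ∀ e : E, ∃ φ : E → ℤ, G.IsFlow O φ ∧ φ e ≠ 0) :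
    ∃ φ : E → ℤ, G.IsFlow O φ ∧ ∀ e, φ e ≠ 0 := by
  classical
  have key : ∀ T : Finset E, ∃ φ : E → ℤ, G.IsFlow O φ ∧ ∀ e ∈ T, φ e ≠ 0 := by
    intro T
    induction T using Finset.induction_on with
    | empty => exact ⟨fun _ => 0, isFlow_zero O, by simp⟩
    | @insert a T ha ih =>
      obtain ⟨φ, hφ, hT⟩ := ih
      obtain ⟨ψ, hψ, haψ⟩ := hex a
      set N : ℤ := 1 + ∑ x : E, |φ x| with hN
      have hNbig : ∀ x : E, |φ x| < N := by
        intro x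
        have h1 : |φ x| ≤ ∑ x : E, |φ x| :=
          Finset.single_le_sum (fun i _ => abs_nonneg (φ i)) (Finset.mem_univ x)
        omega
      have hkey : ∀ x : E, ψ x ≠ 0 → φ x + N * ψ x ≠ 0 := by
        intro x hne h0
        have h1 : N * ψ x = -φ x := by linarith
        have h2 : 1 ≤ |ψ x| := Int.one_le_abs hne
        have h3 : 0 < N := by
          have := Finset.sum_nonneg (fun i (_ : i ∈ (univ : Finset E)) => abs_nonneg (φ i))
          omega
        have h4 : N ≤ |N * ψ x| := by
          rw [abs_mul, abs_of_pos h3]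
          nlinarith
        rw [h1, abs_neg] at h4
        have := hNbig x
        omega
      refine ⟨fun e => φ e + N * ψ e, isFlow_add_smul O φ ψ N hφ hψ, ?_⟩
      intro e he
      rcases Finset.mem_insert.1 he with rfl | heT
      · exact hkey e haψ
      · by_cases hz : ψ e = 0
        · simpa [hz] using hT e heT
        · exact hkey e hz
  obtain ⟨φ, h1, h2⟩ := key univ
  exact ⟨φ, h1, fun e => h2 e (Finset.mem_univ e)⟩

lemma qflow_to_zflow (O : G.Orientation) (x : E → ℚ) (hf : G.IsFlow O x) {e : E}
    (hx : x e ≠ 0) : ∃ φ : E → ℤ, G.IsFlow O φ ∧ φ e ≠ 0 := by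
  classical
  set d : ℚ := ∏ e' : E, ((x e').den : ℚ) with hd
  have hd0 : d ≠ 0 := Finset.prod_ne_zero_iff.2
    (fun e' _ => Nat.cast_ne_zero.2 (Rat.den_pos (x e')).ne')
  set φ : E → ℤ := fun e' => (∏ e'' ∈ univ.erase e', ((x e'').den : ℤ)) * (x e').num with hφ
  have hcast : ∀ e', ((φ e' : ℤ) : ℚ) = d * x e' := by
    intro e'
    rw [hφ]
    push_cast
    rw [hd, ← Finset.mul_prod_erase univ (fun e'' => ((x e'').den : ℚ)) (Finset.mem_univ e')]
    rw [mul_comm ((x e').den : ℚ), mul_assoc]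
    congr 1
    rw [mul_comm]
    exact (Rat.mul_den_eq_num _).symm
  refine ⟨φ, ?_, ?_⟩
  · intro v
    have hq := hf v
    have hcastsum : ((∑ p ∈ univ.filter (fun p : E × Bool => G.ends p.1 p.2 = v),
        (if O.dir p.1 p.2 then φ p.1 else -φ p.1) : ℤ) : ℚ)
        = d * ∑ p ∈ univ.filter (fun p : E × Bool => G.ends p.1 p.2 = v),
          (if O.dir p.1 p.2 then x p.1 else -x p.1) := by
      push_cast
      rw [Finset.mul_sum]
      apply Finset.sum_congr rfl
      intro p _
      by_cases hdir : O.dir p.1 p.2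
      · rw [if_pos hdir, if_pos hdir]
        exact hcast p.1
      · rw [if_neg hdir, if_neg hdir, hcast p.1]
        ring
    rw [hq, mul_zero] at hcastsum
    exact_mod_cast hcastsum
  · intro h0
    have hc := hcast e
    rw [h0] at hc
    simp only [Int.cast_zero] at hc
    rcases mul_eq_zero.1 hc.symm with h | h
    · exact hd0 h
    · exact hx h

end SignedGraph


open SignedGraph Finset in
/-- A signed eulerian graph is flow-admissible (admits a
nowhere-zero integer flow) if and only if it is not tightly unbalanced. -/
theorem stmt0 {V E : Type} [Fintype V] [Fintype E] [DecidableEq V]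
    [DecidableEq E] (G : SignedGraph V E) (hG : G.Eulerian) :
    G.FlowAdmissible ↔ ¬ G.TightlyUnbalanced := by
  classical
  constructor
  · rintro ⟨O, φ, hflow, hnz⟩ ⟨hnb, f, hf⟩
    obtain ⟨θ, hθ⟩ := exists_switching (G := G) (univ.erase f)
      (fun S hc hsub => hf S hc (fun hmem => (Finset.mem_erase.1 (hsub hmem)).1 rfl))
    by_cases hcons : G.sign f = θ (G.ends f false) * θ (G.ends f true)
    · apply hnb
      intro S hS
      apply G.signOf_eq_one_of_consistent θ S ?_ (fun v => G.valencyOn_even_of_circuit hS v)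
      intro e' he'S
      by_cases hef : e' = f
      · rw [hef]; exact hcons
      · exact hθ e' (Finset.mem_erase.2 ⟨hef, Finset.mem_univ _⟩)
    · have hsf : G.sign f = -(θ (G.ends f false) * θ (G.ends f true)) :=
        Int.units_ne_iff_eq_neg.1 hcons
      set y : V → ℤ := fun v => ((θ v : ℤˣ) : ℤ) with hy
      have hswap := swap_sum (R := ℤ) O y φ
      have hL : (∑ v : V, y v * (∑ p ∈ univ.filter (fun p : E × Bool => G.ends p.1 p.2 = v),
          (if O.dir p.1 p.2 then φ p.1 else -φ p.1))) = 0 := by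
        apply Finset.sum_eq_zero
        intro v _
        rw [hflow v, mul_zero]
      have hyval : ∀ v, y v = 1 ∨ y v = -1 := by
        intro v
        rcases Int.units_eq_one_or (θ v) with h | h <;> simp [hy, h]
      have hDz : ∀ e', e' ≠ f → Dval O y e' = 0 := by
        intro e' hne
        have hcons' := hθ e' (Finset.mem_erase.2 ⟨hne, Finset.mem_univ _⟩)
        rcases dval_spec O y e' with ⟨h1, h2⟩ | ⟨h1, h2⟩
        · rw [h1] at hcons'
          have heq : θ (G.ends e' false) = θ (G.ends e' true) :=
            units_eq_of_mul_eq_one hcons'.symm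
          have hyy : y (G.ends e' false) = y (G.ends e' true) := by
            simp only [hy, heq]
          rcases h2 with h2 | h2 <;> rw [h2, hyy] <;> ring
        · rw [h1] at hcons'
          have h3 : θ (G.ends e' false) * θ (G.ends e' true) = -1 := hcons'.symm
          have hyy : y (G.ends e' false) = -y (G.ends e' true) := by
            rcases Int.units_eq_one_or (θ (G.ends e' false)) with ha | ha <;>
              rcases Int.units_eq_one_or (θ (G.ends e' true)) with hb | hb <;>
              rw [ha, hb] at h3 <;>
              first
                | exact absurd h3 (by decide)
                | simp [hy, ha, hb]
          rcases h2 with h2 | h2 <;> rw [h2, hyy] <;> ring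
      have hDf : Dval O y f ≠ 0 := by
        rcases dval_spec O y f with ⟨h1, h2⟩ | ⟨h1, h2⟩
        · rw [h1] at hsf
          have h3 : θ (G.ends f false) * θ (G.ends f true) = -1 := by
            rcases Int.units_eq_one_or (θ (G.ends f false) * θ (G.ends f true)) with hx | hx
            · rw [hx] at hsf; exact absurd hsf (by decide)
            · exact hx
          have hyy : y (G.ends f false) = -y (G.ends f true) := by
            rcases Int.units_eq_one_or (θ (G.ends f false)) with ha | ha <;>
              rcases Int.units_eq_one_or (θ (G.ends f true)) with hb | hb <;>
              rw [ha, hb] at h3 <;>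
              first
                | exact absurd h3 (by decide)
                | simp [hy, ha, hb]
          rcases hyval (G.ends f true) with hb | hb <;>
            rcases h2 with h2 | h2 <;> rw [h2, hyy, hb] <;> norm_num
        · rw [h1] at hsf
          have h3 : θ (G.ends f false) * θ (G.ends f true) = 1 := by
            rcases Int.units_eq_one_or (θ (G.ends f false) * θ (G.ends f true)) with hx | hx
            · exact hx
            · rw [hx] at hsf; exact absurd hsf (by decide)
          have heq : θ (G.ends f false) = θ (G.ends f true) := units_eq_of_mul_eq_one h3
          have hyy : y (G.ends f false) = y (G.ends f true) := by
            simp only [hy, heq]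
          rcases hyval (G.ends f true) with hb | hb <;>
            rcases h2 with h2 | h2 <;> rw [h2, hyy, hb] <;> norm_num
      have hsum : (∑ e' : E, φ e' * Dval O y e') = 0 := by rw [← hswap]; exact hL
      have hsingle : (∑ e' : E, φ e' * Dval O y e') = φ f * Dval O y f := by
        apply Finset.sum_eq_single_of_mem f (Finset.mem_univ f)
        intro e' _ hne
        rw [hDz e' hne, mul_zero]
      rw [hsingle] at hsum
      rcases mul_eq_zero.1 hsum with h | h
      · exact hnz f h
      · exact hDf h
  · intro hntu
    set O := G.stdOrient with hO
    have hex : ∀ e : E, ∃ x : E → ℚ, G.IsFlow O x ∧ x e ≠ 0 := by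
      intro e
      by_contra hno
      push_neg at hno
      have hB : ∀ x : E → ℚ, (flowMat (G := G) O).mulVecLin x = 0 → x e = 0 := by
        intro x hx
        exact hno x ((isFlow_iff_mulVec O x).2 hx)
      obtain ⟨y, hy⟩ := exists_dual _ hB
      have hcon : ∀ e' : E, Dval O y e' = if e' = e then 1 else 0 := by
        intro e'
        set xind : E → ℚ := fun w => if w = e' then (1 : ℚ) else 0 with hxind
        have h2 : (∑ v : V, y v * (flowMat (G := G) O).mulVecLin xind v)
            = ∑ e'' : E, xind e'' * Dval O y e'' := by
          rw [show (∑ v : V, y v * (flowMat (G := G) O).mulVecLin xind v)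
              = ∑ v : V, y v * ∑ p ∈ univ.filter (fun p : E × Bool => G.ends p.1 p.2 = v),
                (if O.dir p.1 p.2 then xind p.1 else -xind p.1) from
            Finset.sum_congr rfl fun v _ => by rw [Matrix.mulVecLin_apply, mulVec_eq_flowSum]]
          exact swap_sum O y xind
        have h1 := hy xind
        rw [h2] at h1
        have h3 : (∑ e'' : E, xind e'' * Dval O y e'') = Dval O y e' := by
          have hterm : ∀ e'' : E, xind e'' * Dval O y e''
              = if e'' = e' then Dval O y e'' else 0 := fun e'' => by
            by_cases h : e'' = e' <;> simp [hxind, h]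
          rw [Finset.sum_congr rfl fun e'' _ => hterm e'']
          rw [Finset.sum_ite_eq' univ e' (fun e'' => Dval O y e'')]
          exact if_pos (Finset.mem_univ e')
        rw [h3] at h1
        simp only [hxind] at h1
        by_cases he' : e' = e
        · rw [if_pos he']
          rw [if_pos he'.symm] at h1
          exact h1.symm
        · rw [if_neg he']
          rw [if_neg (fun hc => he' hc.symm)] at h1
          exact h1.symm
      have hreach : ∀ u v : V, Relation.ReflTransGen (G.AdjOn (univ.erase e)) u v :=
        fun u v => bridge hG.1 hG.2 e u v
      have habs : ∀ u v : V, Relation.ReflTransGen (G.AdjOn (univ.erase e)) u v →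
          |y u| = |y v| := by
        intro u v h
        induction h with
        | refl => rfl
        | tail _ step ih =>
          obtain ⟨e₁, he₁, i, hu2, hv2⟩ := step
          have hne : e₁ ≠ e := (Finset.mem_erase.1 he₁).1
          have hD : Dval O y e₁ = 0 := by rw [hcon e₁, if_neg hne]
          have habs2 := abs_eq_of_dval_zero (G := G) hD
          rw [ih]
          rcases Bool.eq_false_or_eq_true i with hb | hb <;> subst hb
          · simp only [Bool.not_true] at hv2
            rw [← hu2, ← hv2]
            exact habs2.symm
          · simp only [Bool.not_false] at hv2
            rw [← hu2, ← hv2]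
            exact habs2
      have habs' : ∀ u v : V, |y u| = |y v| := fun u v => habs u v (hreach u v)
      by_cases hy0 : ∀ v, y v = 0
      · have h1 := hcon e
        rw [if_pos rfl] at h1
        rw [Dval, hy0 (G.ends e false), hy0 (G.ends e true)] at h1
        simp at h1
      · push_neg at hy0
        obtain ⟨v₁, hv₁⟩ := hy0
        have hall : ∀ v, y v ≠ 0 := by
          intro v h0
          apply hv₁
          have h1 := habs' v₁ v
          rw [h0] at h1
          simpa using h1
        set θ : V → ℤˣ := fun v => if 0 < y v then 1 else -1 with hθdef
        have hsign : ∀ v, (0 < y v ∧ θ v = 1) ∨ (y v < 0 ∧ θ v = -1) := by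
          intro v
          by_cases h : 0 < y v
          · exact Or.inl ⟨h, by simp [hθdef, h]⟩
          · exact Or.inr ⟨lt_of_le_of_ne (not_lt.1 h) (hall v), by simp [hθdef, h]⟩
        have key1 : ∀ u v : V, θ u * θ v = 1 → y u = y v := by
          intro u v h
          rcases hsign u with ⟨hu1, hu2⟩ | ⟨hu1, hu2⟩ <;>
            rcases hsign v with ⟨hv1, hv2⟩ | ⟨hv1, hv2⟩ <;>
            rw [hu2, hv2] at h
          · have hab := habs' u v
            rw [abs_of_pos hu1, abs_of_pos hv1] at hab
            exact hab
          · exact absurd h (by decide)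
          · exact absurd h (by decide)
          · have hab := habs' u v
            rw [abs_of_neg hu1, abs_of_neg hv1] at hab
            linarith
        have key2 : ∀ u v : V, θ u * θ v = -1 → y u = -y v := by
          intro u v h
          rcases hsign u with ⟨hu1, hu2⟩ | ⟨hu1, hu2⟩ <;>
            rcases hsign v with ⟨hv1, hv2⟩ | ⟨hv1, hv2⟩ <;>
            rw [hu2, hv2] at h
          · exact absurd h (by decide)
          · have hab := habs' u v
            rw [abs_of_pos hu1, abs_of_neg hv1] at hab
            linarith
          · have hab := habs' u v
            rw [abs_of_neg hu1, abs_of_pos hv1] at hab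
            linarith
          · exact absurd h (by decide)
        have hθcons : ∀ e', e' ≠ e →
            G.sign e' = θ (G.ends e' false) * θ (G.ends e' true) := by
          intro e' hne
          have hD : Dval O y e' = 0 := by rw [hcon e', if_neg hne]
          rcases dval_spec O y e' with ⟨h1, h2⟩ | ⟨h1, h2⟩
          · have hyy : y (G.ends e' false) = y (G.ends e' true) := by
              rcases h2 with h2 | h2 <;> rw [hD] at h2 <;> linarith
            rw [h1]
            rcases hsign (G.ends e' false) with ⟨ha1, ha2⟩ | ⟨ha1, ha2⟩ <;>
              rcases hsign (G.ends e' true) with ⟨hb1, hb2⟩ | ⟨hb1, hb2⟩ <;>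
              rw [ha2, hb2] <;>
              first
                | decide
                | (exfalso; rw [hyy] at ha1; linarith)
          · have hyy : y (G.ends e' false) = -y (G.ends e' true) := by
              rcases h2 with h2 | h2 <;> rw [hD] at h2 <;> linarith
            rw [h1]
            rcases hsign (G.ends e' false) with ⟨ha1, ha2⟩ | ⟨ha1, ha2⟩ <;>
              rcases hsign (G.ends e' true) with ⟨hb1, hb2⟩ | ⟨hb1, hb2⟩ <;>
              rw [ha2, hb2] <;>
              first
                | decide
                | (exfalso; rw [hyy] at ha1; linarith)
        by_cases hbal : G.Balanced
        · obtain ⟨θ2, hθ2⟩ := exists_switching (G := G) univ (fun S hc _ => hbal S hc)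
          have hall1 : G.signOf univ = 1 :=
            G.signOf_eq_one_of_consistent θ2 univ (fun e' _ => hθ2 e' (Finset.mem_univ _))
              (fun v => hG.2 v)
          have h2 : G.signOf (univ.erase e) = θ (G.ends e false) * θ (G.ends e true) := by
            rw [signOf]
            rw [Finset.prod_congr rfl (fun e' he' => hθcons e' (Finset.mem_erase.1 he').1)]
            rw [← prod_pow_valencyOn]
            have hval : ∀ v, θ v ^ G.valencyOn (univ.erase e) v = θ v ^ G.incE e v := by
              intro v
              have hsum2 : G.valencyOn (univ.erase e) v + G.incE e v = G.valencyOn univ v := by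
                rw [G.valencyOn_eq_sum, G.valencyOn_eq_sum]
                exact Finset.sum_erase_add univ _ (Finset.mem_univ e)
              have hpow : θ v ^ (G.valencyOn (univ.erase e) v + G.incE e v) = 1 := by
                rw [hsum2]; exact units_pow_even _ (hG.2 v)
              rw [pow_add] at hpow
              have hbb : θ v ^ G.incE e v * θ v ^ G.incE e v = 1 := by
                rw [← pow_add]; exact units_pow_even _ ⟨_, rfl⟩
              calc θ v ^ G.valencyOn (univ.erase e) v
                  = θ v ^ G.valencyOn (univ.erase e) v * (θ v ^ G.incE e v * θ v ^ G.incE e v) := by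
                    rw [hbb, mul_one]
                _ = (θ v ^ G.valencyOn (univ.erase e) v * θ v ^ G.incE e v) * θ v ^ G.incE e v := by
                    rw [mul_assoc]
                _ = θ v ^ G.incE e v := by rw [hpow, one_mul]
            rw [Finset.prod_congr rfl (fun v _ => hval v)]
            exact G.prod_pow_incE θ e
          have h3 : G.sign e * G.signOf (univ.erase e) = 1 := by
            rw [signOf, Finset.mul_prod_erase univ _ (Finset.mem_univ e)]
            exact hall1
          have h4 : G.sign e = θ (G.ends e false) * θ (G.ends e true) := by
            rw [h2] at h3
            exact units_eq_of_mul_eq_one h3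
          have hD := hcon e
          rw [if_pos rfl] at hD
          have hDz2 : Dval O y e = 0 := by
            rcases dval_spec O y e with ⟨h1, hd2⟩ | ⟨h1, hd2⟩
            · rw [h1] at h4
              have hyy := key1 _ _ h4.symm
              rcases hd2 with hd2 | hd2 <;> rw [hd2] <;> linarith
            · rw [h1] at h4
              have hyy := key2 _ _ h4.symm
              rcases hd2 with hd2 | hd2 <;> rw [hd2] <;> linarith
          rw [hDz2] at hD
          exact absurd hD (by norm_num)
        · have hnotex : ¬ ∃ f : E, ∀ S : Finset E, G.IsCircuit S → f ∉ S → G.signOf S = 1 :=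
            fun hexf => hntu ⟨hbal, hexf⟩
          push_neg at hnotex
          obtain ⟨S, hS, hfS, hsign1⟩ := hnotex e
          apply hsign1
          apply G.signOf_eq_one_of_consistent θ S ?_ (fun v => G.valencyOn_even_of_circuit hS v)
          intro e' he'S
          exact hθcons e' (fun hc => hfS (hc ▸ he'S))
    have hexz : ∀ e : E, ∃ φ : E → ℤ, G.IsFlow O φ ∧ φ e ≠ 0 := by
      intro e
      obtain ⟨x, h1, h2⟩ := hex e
      exact qflow_to_zflow O x h1 h2
    obtain ⟨φ, h1, h2⟩ := combine O hexz
    exact ⟨O, φ, h1, h2⟩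
end

section
/- A connected signed graph G admits a nowhere-zero 2-flow if and only if G is eulerian with an even number of negative edges. -/
open Finset

namespace SGAux
open SignedGraph Finset
set_option linter.unusedSectionVars false
set_option linter.unreachableTactic false
set_option linter.unusedTactic false

variable {V E : Type} [Fintype V] [Fintype E] [DecidableEq V] [DecidableEq E]

/-- Half-edges of edges of `S` attached at `v`. -/
def hf (G : SignedGraph V E) (S : Finset E) (v : V) : Finset (E × Bool) :=
  univ.filter fun p : E × Bool => p.1 ∈ S ∧ G.ends p.1 p.2 = v

lemma valencyOn_eq_card (G : SignedGraph V E) (S : Finset E) (v : V) :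
    G.valencyOn S v = (hf G S v).card := rfl

lemma hf_empty (G : SignedGraph V E) (v : V) : hf G (∅ : Finset E) v = ∅ := by
  simp [hf]

lemma hf_union (G : SignedGraph V E) (S T : Finset E) (v : V) :
    hf G (S ∪ T) v = hf G S v ∪ hf G T v := by
  ext p; simp [hf]; tauto

lemma hf_disjoint (G : SignedGraph V E) {S T : Finset E} (h : Disjoint S T) (v : V) :
    Disjoint (hf G S v) (hf G T v) := by
  rw [Finset.disjoint_left] at h ⊢
  intro p hp hq
  simp [hf] at hp hq
  exact h hp.1 hq.1

lemma hf_mono (G : SignedGraph V E) {S T : Finset E} (h : S ⊆ T) (v : V) :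
    hf G S v ⊆ hf G T v := by
  intro p hp; simp [hf] at hp ⊢; exact ⟨h hp.1, hp.2⟩

lemma sum_hf_singleton {M : Type*} [AddCommMonoid M] (G : SignedGraph V E) (a : E) (v : V)
    (f : E × Bool → M) :
    ∑ p ∈ hf G {a} v, f p =
      (if v = G.ends a false then f (a, false) else 0) +
      (if v = G.ends a true then f (a, true) else 0) := by
  have hset : hf G {a} v
      = ({(a, false), (a, true)} : Finset (E × Bool)).filter
          fun p => G.ends p.1 p.2 = v := by
    ext ⟨e, b⟩
    cases b <;> simp [hf, eq_comm] <;> tauto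
  rw [hset, Finset.sum_filter, Finset.sum_pair (by simp)]
  simp [eq_comm]

lemma sum_hf_insert {M : Type*} [AddCommMonoid M] (G : SignedGraph V E) {a : E}
    {S : Finset E} (ha : a ∉ S) (v : V) (f : E × Bool → M) :
    ∑ p ∈ hf G (insert a S) v, f p =
      ((if v = G.ends a false then f (a, false) else 0) +
       (if v = G.ends a true then f (a, true) else 0)) +
      ∑ p ∈ hf G S v, f p := by
  have h1 : insert a S = {a} ∪ S := by rw [Finset.insert_eq]
  rw [h1, hf_union,
    Finset.sum_union (hf_disjoint G (by simpa using ha) v), sum_hf_singleton]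

lemma valencyOn_insert (G : SignedGraph V E) {a : E} {S : Finset E} (ha : a ∉ S) (v : V) :
    G.valencyOn (insert a S) v =
      ((if v = G.ends a false then 1 else 0) +
       (if v = G.ends a true then 1 else 0)) + G.valencyOn S v := by
  have h := sum_hf_insert (M := ℕ) G ha v (fun _ => 1)
  rw [valencyOn_eq_card, valencyOn_eq_card, Finset.card_eq_sum_ones,
    Finset.card_eq_sum_ones (hf G S v)]
  exact h

lemma valencyOn_union (G : SignedGraph V E) {S T : Finset E} (h : Disjoint S T) (v : V) :
    G.valencyOn (S ∪ T) v = G.valencyOn S v + G.valencyOn T v := by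
  rw [valencyOn_eq_card, valencyOn_eq_card, valencyOn_eq_card, hf_union,
    Finset.card_union_of_disjoint (hf_disjoint G h v)]

lemma valencyOn_empty (G : SignedGraph V E) (v : V) :
    G.valencyOn (∅ : Finset E) v = 0 := by
  simp [valencyOn_eq_card, hf_empty]

/-- `ITF G u w L`: `L` is a walk from `u` to `w` (each step `(e,i)` traverses
`e` from `ends e i` to `ends e (!i)`). -/
def ITF (G : SignedGraph V E) : V → V → List (E × Bool) → Prop
  | u, w, [] => u = w
  | u, w, p :: L => G.ends p.1 p.2 = u ∧ ITF G (G.ends p.1 !p.2) w L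

@[simp] lemma ITF_nil (G : SignedGraph V E) (u w : V) : ITF G u w [] ↔ u = w := Iff.rfl

@[simp] lemma ITF_cons (G : SignedGraph V E) (u w : V) (p : E × Bool) (L : List (E × Bool)) :
    ITF G u w (p :: L) ↔ G.ends p.1 p.2 = u ∧ ITF G (G.ends p.1 !p.2) w L := Iff.rfl

def edgesOf (L : List (E × Bool)) : Finset E := (L.map Prod.fst).toFinset

@[simp] lemma edgesOf_nil : edgesOf ([] : List (E × Bool)) = ∅ := rfl

@[simp] lemma edgesOf_cons (p : E × Bool) (L : List (E × Bool)) :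
    edgesOf (p :: L) = insert p.1 (edgesOf L) := by
  simp [edgesOf]

@[simp] lemma edgesOf_append (L₁ L₂ : List (E × Bool)) :
    edgesOf (L₁ ++ L₂) = edgesOf L₁ ∪ edgesOf L₂ := by
  simp [edgesOf]

lemma mem_edgesOf {e : E} {L : List (E × Bool)} :
    e ∈ edgesOf L ↔ ∃ p ∈ L, p.1 = e := by
  simp [edgesOf]

lemma ITF_append {G : SignedGraph V E} :
    ∀ {L₁ L₂ : List (E × Bool)} {u w x : V},
      ITF G u w L₁ → ITF G w x L₂ → ITF G u x (L₁ ++ L₂) := by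
  intro L₁
  induction L₁ with
  | nil => intro L₂ u w x h1 h2; cases h1; simpa using h2
  | cons p L ih =>
      intro L₂ u w x h1 h2
      exact ⟨h1.1, ih h1.2 h2⟩

lemma ITF_split {G : SignedGraph V E} :
    ∀ {L₁ L₂ : List (E × Bool)} {u x : V},
      ITF G u x (L₁ ++ L₂) → ∃ w, ITF G u w L₁ ∧ ITF G w x L₂ := by
  intro L₁
  induction L₁ with
  | nil => intro L₂ u x h; exact ⟨u, rfl, by simpa using h⟩
  | cons p L ih =>
      intro L₂ u x h
      obtain ⟨w, h1, h2⟩ := ih h.2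
      exact ⟨w, ⟨h.1, h1⟩, h2⟩

lemma trail_parity {G : SignedGraph V E} :
    ∀ {L : List (E × Bool)} {u w : V}, ITF G u w L → (L.map Prod.fst).Nodup →
      ∀ v : V, (G.valencyOn (edgesOf L) v + (if v = u then 1 else 0) +
        (if v = w then 1 else 0)) % 2 = 0 := by
  intro L
  induction L with
  | nil =>
      intro u w h _ v
      cases h
      rw [edgesOf_nil, valencyOn_empty]
      by_cases hv : v = u <;> simp [hv]
  | cons p L ih =>
      intro u w h hnd v
      rcases p with ⟨e, b⟩
      rcases h with ⟨h1, h2⟩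
      rw [List.map_cons] at hnd
      have hnd' := List.nodup_cons.mp hnd
      have ha : (e, b).1 ∉ edgesOf L := by
        simp only [edgesOf, List.mem_toFinset]
        exact hnd'.1
      have hIH := ih h2 hnd'.2 v
      rw [edgesOf_cons, valencyOn_insert G ha v]
      cases b <;> simp only [Bool.not_false, Bool.not_true] at h1 h2 hIH ⊢ <;>
        subst h1 <;> split_ifs at hIH ⊢ <;> omega

lemma exists_unused_halfedge {G : SignedGraph V E} {S : Finset E} {L : List (E × Bool)}
    {u w : V} (hev : ∀ v, Even (G.valencyOn S v)) (hT : ITF G u w L)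
    (hnd : (L.map Prod.fst).Nodup) (hsub : edgesOf L ⊆ S) (hne : u ≠ w) :
    ∃ p : E × Bool, p.1 ∈ S ∧ p.1 ∉ edgesOf L ∧ G.ends p.1 p.2 = w := by
  have hodd := trail_parity hT hnd w
  rw [if_neg (fun h => hne h.symm), if_pos rfl] at hodd
  have h1 : G.valencyOn (edgesOf L) w % 2 = 1 := by omega
  have h2 : G.valencyOn S w % 2 = 0 := Nat.even_iff.mp (hev w)
  have hss : hf G (edgesOf L) w ⊂ hf G S w :=
    lt_of_le_of_ne (hf_mono G hsub w) (fun hEq => by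
      rw [valencyOn_eq_card, hEq, ← valencyOn_eq_card] at h1
      omega)
  obtain ⟨p, hpS, hpL⟩ := Finset.exists_of_ssubset hss
  simp only [hf, Finset.mem_filter, Finset.mem_univ, true_and] at hpS hpL
  push_neg at hpL
  exact ⟨p, hpS.1, fun hmem => hpL hmem hpS.2, hpS.2⟩

lemma trail_close {G : SignedGraph V E} :
    ∀ (n : ℕ) (S : Finset E), (∀ v, Even (G.valencyOn S v)) →
    ∀ (u w : V) (L : List (E × Bool)), ITF G u w L → (L.map Prod.fst).Nodup →
      edgesOf L ⊆ S → (S \ edgesOf L).card ≤ n →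
      ∃ L', ITF G u u L' ∧ (L'.map Prod.fst).Nodup ∧ edgesOf L ⊆ edgesOf L' ∧
        edgesOf L' ⊆ S := by
  intro n
  induction n with
  | zero =>
      intro S hev u w L hT hnd hsub hcard
      by_cases huw : u = w
      · subst huw; exact ⟨L, hT, hnd, subset_rfl, hsub⟩
      · exfalso
        obtain ⟨p, hpS, hpL, _⟩ := exists_unused_halfedge hev hT hnd hsub huw
        have hmem : p.1 ∈ S \ edgesOf L := Finset.mem_sdiff.mpr ⟨hpS, hpL⟩
        have := Finset.card_pos.mpr ⟨p.1, hmem⟩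
        omega
  | succ n ih =>
      intro S hev u w L hT hnd hsub hcard
      by_cases huw : u = w
      · subst huw; exact ⟨L, hT, hnd, subset_rfl, hsub⟩
      · obtain ⟨p, hpS, hpL, hpw⟩ := exists_unused_halfedge hev hT hnd hsub huw
        have hT' : ITF G u (G.ends p.1 !p.2) (L ++ [p]) :=
          ITF_append hT (by simp [ITF, hpw])
        have hnd' : ((L ++ [p]).map Prod.fst).Nodup := by
          rw [List.map_append, List.nodup_append]
          refine ⟨hnd, by simp, ?_⟩
          intro a ha b hb hab
          simp only [List.map_cons, List.map_nil, List.mem_singleton] at hb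
          subst hb
          subst hab
          exact hpL (by simp [edgesOf, List.mem_toFinset, ha])
        have hsub' : edgesOf (L ++ [p]) ⊆ S := by
          rw [edgesOf_append]
          exact Finset.union_subset hsub (by simp [edgesOf, hpS])
        have hlt : (S \ edgesOf (L ++ [p])).card < (S \ edgesOf L).card := by
          apply Finset.card_lt_card
          constructor
          · apply Finset.sdiff_subset_sdiff subset_rfl
            rw [edgesOf_append]
            exact Finset.subset_union_left
          · intro hcontra
            have h1 : p.1 ∈ S \ edgesOf L := Finset.mem_sdiff.mpr ⟨hpS, hpL⟩
            have h2 := hcontra h1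
            rw [Finset.mem_sdiff] at h2
            exact h2.2 (by simp [edgesOf])
        obtain ⟨L', h1, h2, h3, h4⟩ := ih S hev u _ (L ++ [p]) hT' hnd' hsub'
          (by omega)
        refine ⟨L', h1, h2, le_trans ?_ h3, h4⟩
        rw [edgesOf_append]
        exact Finset.subset_union_left

lemma edgesOf_eq_of_perm {L₁ L₂ : List (E × Bool)}
    (h : List.Perm (L₁.map Prod.fst) (L₂.map Prod.fst)) : edgesOf L₁ = edgesOf L₂ := by
  ext a; simp only [edgesOf, List.mem_toFinset, h.mem_iff]

lemma mem_suppV {G : SignedGraph V E} {S : Finset E} {v : V} :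
    v ∈ G.suppV S ↔ ∃ e ∈ S, ∃ i, G.ends e i = v := by
  simp [SignedGraph.suppV]

lemma trail_rotate {G : SignedGraph V E} {u x : V} {L : List (E × Bool)}
    (hT : ITF G u u L) (hx : x ∈ G.suppV (edgesOf L)) :
    ∃ L', ITF G x x L' ∧ List.Perm (L'.map Prod.fst) (L.map Prod.fst) := by
  obtain ⟨e, heL, i, hei⟩ := mem_suppV.mp hx
  obtain ⟨p, hpL, hpe⟩ := mem_edgesOf.mp heL
  obtain ⟨s, t, rfl⟩ := List.append_of_mem hpL
  by_cases hip : i = p.2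
  · subst hip; subst hpe
    obtain ⟨w, hs, hpt⟩ := ITF_split hT
    have hw : w = x := by rw [← hpt.1, hei]
    subst hw
    refine ⟨(p :: t) ++ s, ITF_append hpt hs, ?_⟩
    simpa using (List.perm_append_comm (l₁ := (p :: t).map Prod.fst)
      (l₂ := s.map Prod.fst))
  · have hip' : i = !p.2 := by
      cases i <;> cases hb : p.2 <;> simp_all
    subst hip'; subst hpe
    have hL : s ++ p :: t = (s ++ [p]) ++ t := by simp
    rw [hL] at hT
    obtain ⟨w, h1, h2⟩ := ITF_split hT
    obtain ⟨w', hs, hp1⟩ := ITF_split h1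
    have hw : w = x := by
      rcases hp1 with ⟨_, hw2⟩
      rw [← hei]
      exact hw2.symm
    subst hw
    refine ⟨t ++ (s ++ [p]), ITF_append h2 h1, ?_⟩
    rw [hL]
    simpa using (List.perm_append_comm (l₁ := t.map Prod.fst)
      (l₂ := (s ++ [p]).map Prod.fst))

lemma exists_attach {G : SignedGraph V E} (hconn : G.Connected) {C : Finset E}
    (hCne : (G.suppV C).Nonempty) (hnotall : C ≠ univ) :
    ∃ p : E × Bool, p.1 ∉ C ∧ G.ends p.1 p.2 ∈ G.suppV C := by
  by_contra hcon
  push_neg at hcon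
  obtain ⟨f, hfC⟩ : ∃ f, f ∉ C := by
    by_contra hall
    push_neg at hall
    exact hnotall (Finset.eq_univ_iff_forall.mpr hall)
  obtain ⟨v0, hv0⟩ := hCne
  have key : ∀ y, Relation.ReflTransGen (G.AdjOn univ) (G.ends f false) y →
      y ∉ G.suppV C := by
    intro y hy
    induction hy with
    | refl => exact hcon (f, false) hfC
    | tail hab hbc ihw =>
        obtain ⟨e, _, i, hb, hc⟩ := hbc
        by_cases heC : e ∈ C
        · exact absurd (mem_suppV.mpr ⟨e, heC, i, hb⟩) ihw
        · have := hcon (e, !i) heC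
          rwa [show G.ends (e, !i).1 (e, !i).2 = _ from hc] at this
  exact key v0 (hconn.2 _ v0) hv0

lemma valencyOn_even_of_closed {G : SignedGraph V E} {u : V} {L : List (E × Bool)}
    (hT : ITF G u u L) (hnd : (L.map Prod.fst).Nodup) (v : V) :
    Even (G.valencyOn (edgesOf L) v) := by
  have h := trail_parity hT hnd v
  rw [Nat.even_iff]
  by_cases hv : v = u
  · rw [if_pos hv] at h; omega
  · rw [if_neg hv] at h; omega

lemma euler_main {G : SignedGraph V E} (hconn : G.Connected)
    (hev : ∀ v, Even (G.valency v)) (e0 : E) :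
    ∃ (u : V) (L : List (E × Bool)), ITF G u u L ∧ (L.map Prod.fst).Nodup ∧
      edgesOf L = univ := by
  have hev' : ∀ v, Even (G.valencyOn (univ : Finset E) v) := hev
  suffices h : ∀ (n : ℕ) (u : V) (L : List (E × Bool)), ITF G u u L →
      (L.map Prod.fst).Nodup → L ≠ [] → ((univ : Finset E) \ edgesOf L).card ≤ n →
      ∃ u' L', ITF G u' u' L' ∧ (L'.map Prod.fst).Nodup ∧ edgesOf L' = univ by
    have hT0 : ITF G (G.ends e0 false) (G.ends e0 true) [(e0, false)] := by
      simp [ITF]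
    obtain ⟨L1, h1, h2, h3, _⟩ := trail_close ((univ : Finset E) \ edgesOf [(e0, false)]).card
      univ hev' _ _ _ hT0 (by simp) (Finset.subset_univ _) le_rfl
    have hL1ne : L1 ≠ [] := by
      intro hnil
      have : (e0 : E) ∈ edgesOf L1 := h3 (by simp [edgesOf])
      rw [hnil] at this
      simp [edgesOf] at this
    obtain ⟨u', L', hh⟩ := h ((univ : Finset E) \ edgesOf L1).card _ L1 h1 h2 hL1ne le_rfl
    exact ⟨u', L', hh⟩
  intro n
  induction n with
  | zero =>
      intro u L hT hnd hne hcard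
      refine ⟨u, L, hT, hnd, ?_⟩
      have : ((univ : Finset E) \ edgesOf L) = ∅ := Finset.card_eq_zero.mp (by omega)
      have hsub : (univ : Finset E) ⊆ edgesOf L := by
        intro a _
        by_contra hmem
        have : a ∈ (univ : Finset E) \ edgesOf L := Finset.mem_sdiff.mpr ⟨Finset.mem_univ a, hmem⟩
        simp_all
      exact Finset.univ_subset_iff.mp hsub
  | succ n ih =>
      intro u L hT hnd hne hcard
      by_cases hall : edgesOf L = univ
      · exact ⟨u, L, hT, hnd, hall⟩
      · -- supp nonempty
        have hsupne : (G.suppV (edgesOf L)).Nonempty := by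
          rcases L with _ | ⟨p, L₂⟩
          · exact absurd rfl hne
          · exact ⟨u, mem_suppV.mpr ⟨p.1, by simp, p.2, hT.1⟩⟩
        obtain ⟨q, hqC, hqsupp⟩ := exists_attach hconn hsupne hall
        -- even valencies on the complement
        have hevC := valencyOn_even_of_closed hT hnd
        have hevS' : ∀ v, Even (G.valencyOn ((univ : Finset E) \ edgesOf L) v) := by
          intro v
          have hun : edgesOf L ∪ ((univ : Finset E) \ edgesOf L) = univ :=
            Finset.union_sdiff_of_subset (Finset.subset_univ _)
          have hdisj : Disjoint (edgesOf L) ((univ : Finset E) \ edgesOf L) :=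
            Finset.disjoint_sdiff
          have := valencyOn_union G hdisj v
          rw [hun] at this
          have h1 := hev' v
          have h2 := hevC v
          rw [Nat.even_iff] at h1 h2 ⊢
          omega
        -- grow a closed trail from x in the complement
        have hTq : ITF G (G.ends q.1 q.2) (G.ends q.1 !q.2) [q] := by simp [ITF]
        have hsubq : edgesOf [q] ⊆ (univ : Finset E) \ edgesOf L := by
          intro a ha
          simp [edgesOf] at ha
          subst ha
          exact Finset.mem_sdiff.mpr ⟨Finset.mem_univ _, hqC⟩
        obtain ⟨L2, hT2, hnd2, hsub2, hsub2'⟩ := trail_close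
          (((univ : Finset E) \ edgesOf L) \ edgesOf [q]).card _ hevS' _ _ [q] hTq
          (by simp) hsubq le_rfl
        -- rotate L to start at x
        obtain ⟨L3, hT3, hperm3⟩ := trail_rotate hT hqsupp
        have hnd3 : (L3.map Prod.fst).Nodup := hperm3.nodup_iff.mpr hnd
        have hedges3 : edgesOf L3 = edgesOf L := edgesOf_eq_of_perm hperm3
        -- combine
        have hdisj23 : ∀ a, a ∈ L2.map Prod.fst → a ∈ L3.map Prod.fst → False := by
          intro a ha hb
          have ha' : a ∈ edgesOf L2 := by simp [edgesOf, List.mem_toFinset, ha]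
          have hb' : a ∈ edgesOf L := by
            rw [← hedges3]; simp [edgesOf, List.mem_toFinset, hb]
          exact (Finset.mem_sdiff.mp (hsub2' ha')).2 hb'
        have hndC : ((L2 ++ L3).map Prod.fst).Nodup := by
          rw [List.map_append, List.nodup_append]
          exact ⟨hnd2, hnd3, fun a ha b hb hab => hdisj23 a ha (by subst hab; exact hb)⟩
        have hTC : ITF G (G.ends q.1 q.2) (G.ends q.1 q.2) (L2 ++ L3) :=
          ITF_append hT2 hT3
        have hneC : L2 ++ L3 ≠ [] := by
          intro hnil
          have : (q.1 : E) ∈ edgesOf (L2 ++ L3) := by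
            rw [edgesOf_append]
            exact Finset.mem_union_left _ (hsub2 (by simp [edgesOf]))
          rw [hnil] at this
          simp [edgesOf] at this
        have hlt : ((univ : Finset E) \ edgesOf (L2 ++ L3)).card <
            ((univ : Finset E) \ edgesOf L).card := by
          apply Finset.card_lt_card
          constructor
          · apply Finset.sdiff_subset_sdiff subset_rfl
            rw [edgesOf_append, ← hedges3]
            exact Finset.subset_union_right
          · intro hcontra
            have h1 : q.1 ∈ (univ : Finset E) \ edgesOf L :=
              Finset.mem_sdiff.mpr ⟨Finset.mem_univ _, hqC⟩
            have h2 := hcontra h1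
            rw [Finset.mem_sdiff] at h2
            refine h2.2 ?_
            rw [edgesOf_append]
            exact Finset.mem_union_left _ (hsub2 (by simp [edgesOf]))
        exact ih _ (L2 ++ L3) hTC hndC hneC (by omega)

/-- The value assigned to a half-edge by walking along the closed trail with
alternating mode: mode flips after each negative edge. -/
def mkY (G : SignedGraph V E) : ℤ → List (E × Bool) → E × Bool → ℤ
  | _, [], _ => 1
  | s, p :: L, q =>
      if q.1 = p.1 then (if q.2 = p.2 then -s else s * (G.sign p.1 : ℤ))
      else mkY G (s * (G.sign p.1 : ℤ)) L q

@[simp] lemma mkY_nil (G : SignedGraph V E) (s : ℤ) (q : E × Bool) :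
    mkY G s [] q = 1 := rfl

lemma mkY_cons (G : SignedGraph V E) (s : ℤ) (p q : E × Bool) (L : List (E × Bool)) :
    mkY G s (p :: L) q =
      if q.1 = p.1 then (if q.2 = p.2 then -s else s * (G.sign p.1 : ℤ))
      else mkY G (s * (G.sign p.1 : ℤ)) L q := rfl

lemma sign_pm (G : SignedGraph V E) (e : E) :
    (G.sign e : ℤ) = 1 ∨ (G.sign e : ℤ) = -1 := by
  rcases Int.units_eq_one_or (G.sign e) with h | h <;> rw [h] <;> simp

lemma state_pm {G : SignedGraph V E} {s : ℤ} (hs : s = 1 ∨ s = -1) (e : E) :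
    s * (G.sign e : ℤ) = 1 ∨ s * (G.sign e : ℤ) = -1 := by
  rcases hs with h | h <;> rcases sign_pm G e with h' | h' <;> rw [h, h'] <;> norm_num

lemma mkY_pm (G : SignedGraph V E) :
    ∀ (L : List (E × Bool)) (s : ℤ), (s = 1 ∨ s = -1) → ∀ q : E × Bool,
      mkY G s L q = 1 ∨ mkY G s L q = -1 := by
  intro L
  induction L with
  | nil => intro s _ q; left; rfl
  | cons p L ih =>
      intro s hs q
      rw [mkY_cons]
      by_cases h1 : q.1 = p.1
      · rw [if_pos h1]
        by_cases h2 : q.2 = p.2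
        · rw [if_pos h2]; rcases hs with h | h <;> rw [h] <;> simp
        · rw [if_neg h2]; exact state_pm hs p.1
      · rw [if_neg h1]; exact ih _ (state_pm hs p.1) q

lemma mkY_prod (G : SignedGraph V E) :
    ∀ (L : List (E × Bool)) (s : ℤ), (s = 1 ∨ s = -1) → ∀ e : E, e ∈ edgesOf L →
      mkY G s L (e, false) * mkY G s L (e, true) = -(G.sign e : ℤ) := by
  intro L
  induction L with
  | nil => intro s _ e he; simp [edgesOf] at he
  | cons p L ih =>
      intro s hs e he
      rcases p with ⟨a, b⟩
      rw [mkY_cons, mkY_cons]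
      by_cases h1 : e = a
      · subst h1
        have hss : s * s = 1 := by rcases hs with h | h <;> rw [h] <;> norm_num
        cases b
        · rw [if_pos rfl, if_pos rfl, if_pos rfl, if_neg (by simp)]
          have hx : -s * (s * (G.sign e : ℤ)) = -((s * s) * (G.sign e : ℤ)) := by
            ring
          rw [hx, hss, one_mul]
        · rw [if_pos rfl, if_pos rfl, if_neg (by simp), if_pos rfl]
          have hx : (s * (G.sign e : ℤ)) * -s = -((s * s) * (G.sign e : ℤ)) := by
            ring
          rw [hx, hss, one_mul]
      · rw [if_neg (by simpa using h1), if_neg (by simpa using h1)]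
        apply ih _ (state_pm hs a) e
        rw [edgesOf_cons] at he
        rcases Finset.mem_insert.mp he with h | h
        · exact absurd h h1
        · exact h

lemma mkY_sum (G : SignedGraph V E) :
    ∀ (L : List (E × Bool)) (u w : V) (s : ℤ), ITF G u w L →
      (L.map Prod.fst).Nodup → (s = 1 ∨ s = -1) → ∀ v : V,
      ∑ p ∈ hf G (edgesOf L) v, mkY G s L p =
        (if v = u then -s else 0) +
        (if v = w then s * (L.map fun p => (G.sign p.1 : ℤ)).prod else 0) := by
  intro L
  induction L with
  | nil =>
      intro u w s hT _ hs v
      have huw : u = w := hT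
      subst huw
      rw [edgesOf_nil, hf_empty]
      simp only [Finset.sum_empty, List.map_nil, List.prod_nil, mul_one]
      by_cases hv : v = u <;> simp [hv]
  | cons p L ih =>
      intro u w s hT hnd hs v
      rcases hT with ⟨h1, h2⟩
      rw [List.map_cons] at hnd
      have hnd' := List.nodup_cons.mp hnd
      have ha : p.1 ∉ edgesOf L := by
        simp only [edgesOf, List.mem_toFinset]; exact hnd'.1
      rw [edgesOf_cons, sum_hf_insert G ha v]
      have hcongr : ∑ q ∈ hf G (edgesOf L) v, mkY G s (p :: L) q =
          ∑ q ∈ hf G (edgesOf L) v, mkY G (s * (G.sign p.1 : ℤ)) L q := by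
        apply Finset.sum_congr rfl
        intro q hq
        have hq1 : q.1 ∈ edgesOf L := by
          simp only [hf, Finset.mem_filter] at hq; exact hq.2.1
        have hne : q.1 ≠ p.1 := fun hEq => ha (hEq ▸ hq1)
        rw [mkY_cons, if_neg hne]
      rw [hcongr, ih _ _ _ h2 hnd'.2 (state_pm hs p.1) v]
      rcases p with ⟨e, b⟩
      cases b
      · simp only [Bool.not_false] at h1 h2 ⊢
        subst h1
        simp only [mkY_cons, List.map_cons, List.prod_cons]
        norm_num
        by_cases h4 : v = w
        · subst h4
          by_cases h3 : v = G.ends e true <;> simp [h3] <;> ring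
        · by_cases h3 : v = G.ends e true <;> simp [h3, h4] <;> ring
      · simp only [Bool.not_true] at h1 h2 ⊢
        subst h1
        simp only [mkY_cons, List.map_cons, List.prod_cons]
        norm_num
        by_cases h4 : v = w
        · subst h4
          by_cases h3 : v = G.ends e false <;> simp [h3] <;> ring
        · by_cases h3 : v = G.ends e false <;> simp [h3, h4] <;> ring

lemma sum_mod_two {ι : Type*} (A : Finset ι) (f : ι → ℤ)
    (h : ∀ i ∈ A, f i % 2 = 1) :
    (∑ i ∈ A, f i) % 2 = (A.card : ℤ) % 2 := by
  induction A using Finset.cons_induction with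
  | empty => simp
  | cons a A ha ih =>
      rw [Finset.sum_cons, Finset.card_cons]
      have h1 := h a (Finset.mem_cons_self a A)
      have h2 := ih (fun i hi => h i (Finset.mem_cons.mpr (Or.inr hi)))
      push_cast
      omega

lemma card_even_of_sum_pm {ι : Type*} (A : Finset ι) (f : ι → ℤ)
    (h1 : ∀ i ∈ A, f i = 1 ∨ f i = -1) (h0 : ∑ i ∈ A, f i = 0) :
    Even A.card := by
  have h := sum_mod_two A f (fun i hi => by rcases h1 i hi with h | h <;> simp [h])
  rw [h0] at h
  rw [Nat.even_iff]
  omega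

lemma prod_sign_eq_one {G : SignedGraph V E}
    (hneg : Even (G.negEdges (univ : Finset E)).card) :
    ∏ e : E, (G.sign e : ℤ) = 1 := by
  classical
  rw [← Finset.prod_filter_mul_prod_filter_not (univ : Finset E)
    (fun e => G.sign e = -1) (fun e => (G.sign e : ℤ))]
  have h1 : ∏ e ∈ (univ : Finset E).filter (fun e => G.sign e = -1),
      (G.sign e : ℤ) = (-1 : ℤ) ^ ((univ : Finset E).filter
        (fun e => G.sign e = -1)).card := by
    rw [Finset.prod_congr rfl (fun e he => ?_), Finset.prod_const]
    rw [Finset.mem_filter] at he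
    rw [he.2]; simp
  have h2 : ∏ e ∈ (univ : Finset E).filter (fun e => ¬ G.sign e = -1),
      (G.sign e : ℤ) = 1 := by
    apply Finset.prod_eq_one
    intro e he
    rw [Finset.mem_filter] at he
    rcases Int.units_eq_one_or (G.sign e) with h | h
    · rw [h]; simp
    · exact absurd h he.2
  rw [h1, h2, mul_one]
  have : Even ((univ : Finset E).filter (fun e => G.sign e = -1)).card := hneg
  exact this.neg_one_pow

end SGAux



open SignedGraph Finset in
/-- A connected signed graph `G` admits a nowhere-zero `2`-flow
if and only if `G` is eulerian with an even number of negative edges. -/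
theorem stmt1 {V E : Type} [Fintype V] [Fintype E] [DecidableEq V]
    [DecidableEq E] (G : SignedGraph V E) (hconn : G.Connected) :
    G.HasNZkFlow 2 ↔ (G.Eulerian ∧ Even (G.negEdges univ).card) := by
  constructor
  · rintro ⟨O, φ, hflow, hbd⟩
    have hφ : ∀ e, φ e = 1 ∨ φ e = -1 := by
      intro e
      obtain ⟨hne, habs⟩ := hbd e
      have := abs_lt.mp habs
      omega
    set y : E × Bool → ℤ := fun p => if O.dir p.1 p.2 then φ p.1 else -φ p.1
      with hy
    have hypm : ∀ p : E × Bool, y p = 1 ∨ y p = -1 := by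
      intro p
      rcases hφ p.1 with h | h <;> by_cases hd : O.dir p.1 p.2 <;>
        simp [hy, hd, h]
    have hsum : ∀ v : V,
        ∑ p ∈ univ.filter (fun p : E × Bool => G.ends p.1 p.2 = v), y p = 0 :=
      hflow
    refine ⟨⟨hconn, ?_⟩, ?_⟩
    · intro v
      have hhf : SGAux.hf G (univ : Finset E) v =
          univ.filter (fun p : E × Bool => G.ends p.1 p.2 = v) := by
        ext p; simp [SGAux.hf]
      rw [show G.valency v = (SGAux.hf G univ v).card from rfl, hhf]
      exact SGAux.card_even_of_sum_pm _ y (fun p _ => hypm p) (hsum v)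
    · have htot : ∑ p : E × Bool, y p = 0 := by
        rw [← Finset.sum_fiberwise (univ : Finset (E × Bool))
          (fun p : E × Bool => G.ends p.1 p.2) y]
        exact Finset.sum_eq_zero (fun v _ => hsum v)
      rw [Fintype.sum_prod_type] at htot
      have hsplit := Finset.sum_filter_add_sum_filter_not (univ : Finset E)
        (fun e => G.sign e = -1) (fun e => ∑ b : Bool, y (e, b))
      have hpos : ∑ e ∈ (univ : Finset E).filter (fun e => ¬ G.sign e = -1),
          (∑ b : Bool, y (e, b)) = 0 := by
        apply Finset.sum_eq_zero
        intro e he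
        rw [Finset.mem_filter] at he
        have hs1 : G.sign e = 1 := by
          rcases Int.units_eq_one_or (G.sign e) with h | h
          · exact h
          · exact absurd h he.2
        have hd := (O.compat e).mp hs1
        rw [Fintype.sum_bool]
        have e0 : y (e, false) = if O.dir e false then φ e else -φ e := rfl
        have e1 : y (e, true) = if O.dir e true then φ e else -φ e := rfl
        cases hd0 : O.dir e false <;> cases hd1 : O.dir e true
        · exact absurd (hd0.trans hd1.symm) hd
        · rw [e0, e1, hd0, hd1]; simp
        · rw [e0, e1, hd0, hd1]; simp
        · exact absurd (hd0.trans hd1.symm) hd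
      have hneg : ∑ e ∈ (univ : Finset E).filter (fun e => G.sign e = -1),
          (∑ b : Bool, y (e, b)) = 0 := by
        have h2 : ∑ e ∈ (univ : Finset E), (∑ b : Bool, y (e, b)) = 0 := htot
        linarith [hsplit, hpos, h2]
      have hterm : ∀ e ∈ (univ : Finset E).filter (fun e => G.sign e = -1),
          (∑ b : Bool, y (e, b)) = 2 * y (e, false) := by
        intro e he
        rw [Finset.mem_filter] at he
        have hdd : O.dir e false = O.dir e true := by
          have := (O.compat e).mpr
          by_contra hne
          have hs1 := (O.compat e).mpr hne
          rw [hs1] at he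
          simp at he
        rw [Fintype.sum_bool]
        have : y (e, true) = y (e, false) := by
          simp only [hy]
          rw [← hdd]
        rw [this]
        ring
      rw [Finset.sum_congr rfl hterm, ← Finset.mul_sum] at hneg
      have hneg2 : ∑ e ∈ (univ : Finset E).filter (fun e => G.sign e = -1),
          y (e, false) = 0 := by linarith
      exact SGAux.card_even_of_sum_pm _ (fun e => y (e, false))
        (fun e _ => hypm _) hneg2
  · rintro ⟨⟨hconn', hev⟩, hneg⟩
    rcases isEmpty_or_nonempty E with hE | hE
    · refine ⟨⟨fun e _ => false, fun e => isEmptyElim e⟩, fun e => isEmptyElim e,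
        ?_, fun e => isEmptyElim e⟩
      intro v
      apply Finset.sum_eq_zero
      intro p _
      exact isEmptyElim p.1
    · obtain ⟨e0⟩ := hE
      obtain ⟨u, L, hT, hnd, hedges⟩ := SGAux.euler_main hconn' hev e0
      set y : E × Bool → ℤ := fun p => SGAux.mkY G 1 L p with hydef
      have hypm : ∀ p, y p = 1 ∨ y p = -1 := fun p =>
        SGAux.mkY_pm G L 1 (Or.inl rfl) p
      have hprod : ∀ e : E, y (e, false) * y (e, true) = -(G.sign e : ℤ) := by
        intro e
        exact SGAux.mkY_prod G L 1 (Or.inl rfl) e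
          (by rw [hedges]; exact Finset.mem_univ e)
      have hcompat : ∀ e : E, G.sign e = 1 ↔
          (decide (y (e, false) = 1) ≠ decide (y (e, true) = 1)) := by
        intro e
        have hp := hprod e
        rcases Int.units_eq_one_or (G.sign e) with hs | hs <;>
          rcases hypm (e, false) with h0 | h0 <;>
          rcases hypm (e, true) with h1 | h1 <;>
          rw [hs] at hp ⊢ <;> rw [h0, h1] at hp <;>
          simp_all <;> omega
      refine ⟨⟨fun e i => decide (y (e, i) = 1), hcompat⟩, fun _ => 1, ?_, ?_⟩
      · intro v
        have h1 : ∀ p ∈ univ.filter (fun p : E × Bool => G.ends p.1 p.2 = v),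
            (if (decide (y (p.1, p.2) = 1) : Bool) then (1 : ℤ) else -1) = y p := by
          intro p _
          rcases hypm p with h | h <;> simp [h]
        rw [Finset.sum_congr rfl h1]
        have hhf : univ.filter (fun p : E × Bool => G.ends p.1 p.2 = v) =
            SGAux.hf G (SGAux.edgesOf L) v := by
          ext p; simp [SGAux.hf, hedges]
        rw [hhf, hydef]
        rw [SGAux.mkY_sum G L u u 1 hT hnd (Or.inl rfl) v]
        have hsign : (L.map fun p => (G.sign p.1 : ℤ)).prod = 1 := by
          have h2 := List.prod_toFinset (fun e => (G.sign e : ℤ)) hnd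
          rw [List.map_map] at h2
          have h3 : (L.map Prod.fst).toFinset = (univ : Finset E) := hedges
          rw [h3] at h2
          rw [show (L.map fun p => (G.sign p.1 : ℤ)) =
            L.map ((fun e => (G.sign e : ℤ)) ∘ Prod.fst) from rfl]
          rw [← h2]
          exact SGAux.prod_sign_eq_one hneg
        rw [hsign]
        by_cases hv : v = u <;> simp [hv]
      · intro e
        norm_num
end

section
/- Let G and H be balanced signed graphs with intersecting vertex sets such that G ∩ H is equally signed in both G and H. If G ∩ H is a consistent subgraph of G and H, then the union G ∪ H is balanced. -/
open Finset

open SignedGraph Finset in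
/-- Let `G` and `H` be balanced signed graphs with intersecting
vertex sets such that `G ∩ H` is equally signed in both `G` and `H`.  If
`G ∩ H` is a consistent subgraph of `G` and `H`, then `G ∪ H` is balanced.

The union `G ∪ H` is modelled as a single ambient signed graph `W` (so the
common subgraph `G ∩ H` is automatically equally signed in `G` and `H`),
with `G` the subgraph on vertices `VG` and edges `EG` and `H` the subgraph on
vertices `VH` and edges `EH`.  A balanced bipartition is given by a `Bool`
colouring of the vertices under which an edge is positive iff its two ends
have equal colours; consistency of `G ∩ H` says that there are balanced
bipartitions of `G` and of `H` agreeing on `VG ∩ VH`, i.e. a balanced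
bipartition of `G ∩ H` extending to both. -/
theorem stmt9 {V E : Type} [Fintype V] [Fintype E] [DecidableEq V]
    [DecidableEq E] (W : SignedGraph V E) (VG VH : Finset V)
    (EG EH : Finset E)
    (hendsG : ∀ e ∈ EG, ∀ i : Bool, W.ends e i ∈ VG)
    (hendsH : ∀ e ∈ EH, ∀ i : Bool, W.ends e i ∈ VH)
    (hVunion : VG ∪ VH = univ) (hEunion : EG ∪ EH = univ)
    (hmeet : (VG ∩ VH).Nonempty)
    (hGbal : ∀ S ⊆ EG, W.IsCircuit S → W.signOf S = 1)
    (hHbal : ∀ S ⊆ EH, W.IsCircuit S → W.signOf S = 1)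
    (hcons : ∃ cG cH : V → Bool,
      (∀ e ∈ EG, (W.sign e = 1 ↔ cG (W.ends e false) = cG (W.ends e true))) ∧
      (∀ e ∈ EH, (W.sign e = 1 ↔ cH (W.ends e false) = cH (W.ends e true))) ∧
      (∀ v ∈ VG ∩ VH, cG v = cH v)) :
    W.Balanced := by
  classical
  obtain ⟨cG, cH, hG, hH, hagree⟩ := hcons
  set c : V → Bool := fun v => if v ∈ VG then cG v else cH v with hc
  have key : ∀ e : E, W.sign e = 1 ↔ c (W.ends e false) = c (W.ends e true) := by
    intro e
    have he : e ∈ EG ∨ e ∈ EH := by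
      have := mem_univ e; rw [← hEunion] at this; exact Finset.mem_union.mp this
    rcases he with he | he
    · have h0 := hendsG e he false
      have h1 := hendsG e he true
      simp only [hc, if_pos h0, if_pos h1]
      exact hG e he
    · have hcH : ∀ i : Bool, c (W.ends e i) = cH (W.ends e i) := by
        intro i
        by_cases hv : W.ends e i ∈ VG
        · simp only [hc, if_pos hv]
          exact hagree _ (Finset.mem_inter.mpr ⟨hv, hendsH e he i⟩)
        · simp [hc, hv]
      rw [hcH false, hcH true]
      exact hH e he
  set χ : Bool → ℤˣ := fun b => if b then 1 else -1 with hχ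
  have hsign : ∀ e : E,
      W.sign e = χ (c (W.ends e false)) * χ (c (W.ends e true)) := by
    intro e
    rcases Int.units_eq_one_or (W.sign e) with h | h
    · have heq := (key e).mp h
      rw [h, heq]
      cases c (W.ends e true) <;> simp [hχ]
    · have hne : c (W.ends e false) ≠ c (W.ends e true) := by
        intro heq
        have := (key e).mpr heq
        rw [h] at this; exact absurd this (by decide)
      rw [h]
      cases h0 : c (W.ends e false) <;> cases h1 : c (W.ends e true)
      · exact absurd (h0.trans h1.symm) hne
      · simp [hχ]
      · simp [hχ]
      · exact absurd (h0.trans h1.symm) hne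
  intro S hS
  have hvalzero : ∀ v : V, v ∉ W.suppV S → W.valencyOn S v = 0 := by
    intro v hv
    rw [SignedGraph.valencyOn, Finset.card_eq_zero, Finset.filter_eq_empty_iff]
    rintro p _ ⟨hp1, hp2⟩
    apply hv
    simp only [SignedGraph.suppV, mem_filter, mem_univ, true_and]
    exact ⟨p.1, hp1, p.2, hp2⟩
  have hvaleven : ∀ v : V, Even (W.valencyOn S v) := by
    intro v
    by_cases hv : v ∈ W.suppV S
    · rw [hS.2.2 v hv]; exact ⟨1, rfl⟩
    · rw [hvalzero v hv]; exact ⟨0, rfl⟩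
  have h1 : W.signOf S = ∏ p ∈ S ×ˢ (univ : Finset Bool),
      χ (c (W.ends p.1 p.2)) := by
    rw [SignedGraph.signOf, Finset.prod_product]
    refine Finset.prod_congr rfl fun e _ => ?_
    rw [hsign e, Fintype.prod_bool, mul_comm]
  have h2 : ∀ p : E × Bool, p ∈ S ×ˢ (univ : Finset Bool) →
      W.ends p.1 p.2 ∈ (univ : Finset V) := fun _ _ => mem_univ _
  rw [h1, ← Finset.prod_fiberwise_of_maps_to h2
      (fun p : E × Bool => χ (c (W.ends p.1 p.2)))]
  have h3 : ∀ v : V, ∏ p ∈ (S ×ˢ (univ : Finset Bool)).filter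
      (fun p => W.ends p.1 p.2 = v), χ (c (W.ends p.1 p.2))
      = χ (c v) ^ (W.valencyOn S v) := by
    intro v
    rw [Finset.prod_congr rfl (fun p hp => by
      rw [(Finset.mem_filter.mp hp).2]), Finset.prod_const]
    congr 1
    rw [SignedGraph.valencyOn]
    congr 1
    ext p
    simp [Finset.mem_filter, Finset.mem_product, and_assoc]
  calc ∏ v : V, ∏ p ∈ (S ×ˢ (univ : Finset Bool)).filter
        (fun p => W.ends p.1 p.2 = v), χ (c (W.ends p.1 p.2))
      = ∏ v : V, χ (c v) ^ (W.valencyOn S v) := by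
        exact Finset.prod_congr rfl fun v _ => h3 v
    _ = 1 := by
        refine Finset.prod_eq_one fun v _ => ?_
        obtain ⟨k, hk⟩ := hvaleven v
        rw [hk, ← two_mul, pow_mul, Int.units_sq, one_pow]
end
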